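/- arXiv:1003.0562 — 5 statements merged into one kernel-verified Lean document; each statement's English description precedes it below -/
import Mathlib

section
/- Let (x_n) be a Benford sequence of real numbers. Then for every real α and every integer k with α·k ≠ 0, the sequence (α·x_n^k) is also Benford (for negative k, terms with x_n = 0 are interpreted via the convention 0^k := 0). -/
open Filter Topology MeasureTheory
open scoped Classical

/-- Decimal significand: for `x ≠ 0`, the unique `s ∈ [1,10)` with `|x| = 10^k * s`;
by convention `signif 0 = 0`. (Intended for nonnegative `x`.) -/
noncomputable def signif (x : ℝ) : ℝ :=
  if x = 0 then 0 else x / (10 : ℝ) ^ (⌊Real.logb 10 x⌋)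

/-- A sequence of reals is Benford (base 10). -/
def BenfordSeq (x : ℕ → ℝ) : Prop :=
  ∀ t : ℝ, 1 ≤ t → t < 10 →
    Tendsto (fun N : ℕ =>
        (((Finset.Icc 1 N).filter fun n => signif |x n| ≤ t).card : ℝ) / (N : ℝ))
      atTop (𝓝 (Real.logb 10 t))

/-- A sequence of reals is uniformly distributed modulo 1. -/
def UDMod1 (y : ℕ → ℝ) : Prop :=
  ∀ a b : ℝ, 0 ≤ a → a < b → b ≤ 1 →
    Tendsto (fun N : ℕ =>
        (((Finset.Icc 1 N).filter fun n => Int.fract (y n) ∈ Set.Ico a b).card : ℝ) / (N : ℝ))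
      atTop (𝓝 (b - a))

def EventuallyZero (x : ℕ → ℝ) : Prop := ∃ N : ℕ, ∀ n, N ≤ n → x n = 0

def RowStochastic {d : ℕ} (P : Matrix (Fin d) (Fin d) ℝ) : Prop :=
  (∀ i j, 0 ≤ P i j) ∧ ∀ i, ∑ j, P i j = 1

/-- Irreducible and aperiodic: some power has all entries strictly positive. -/
def Primitive {d : ℕ} (P : Matrix (Fin d) (Fin d) ℝ) : Prop :=
  ∃ m : ℕ, 0 < m ∧ ∀ i j, 0 < (P ^ m) i j

def MatrixBenford {d : ℕ} (P Pstar : Matrix (Fin d) (Fin d) ℝ) : Prop :=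
  ∀ i j,
    (BenfordSeq (fun n => (P ^ n) i j - Pstar i j) ∨
      EventuallyZero (fun n => (P ^ n) i j - Pstar i j)) ∧
    (BenfordSeq (fun n => (P ^ (n + 1)) i j - (P ^ n) i j) ∨
      EventuallyZero (fun n => (P ^ (n + 1)) i j - (P ^ n) i j))

/-- The set of eigenvalues of `P`, i.e. roots of its characteristic polynomial over `ℂ`. -/
noncomputable def spectrumC {d : ℕ} (P : Matrix (Fin d) (Fin d) ℝ) : Set ℂ :=
  {z | ((P.map (Complex.ofReal : ℝ → ℂ)).charpoly).IsRoot z}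

/-- The reals `1`, `L`, together with the elements of `T`, are rationally independent. -/
def RatIndepWith (L : ℝ) (T : Set ℝ) : Prop :=
  LinearIndependent ℚ
    (Sum.elim (fun _ : Unit => (1 : ℝ))
      (Sum.elim (fun _ : Unit => L) (fun t : T => (t : ℝ))))

def Nonresonant {d : ℕ} (P : Matrix (Fin d) (Fin d) ℝ) : Prop :=
  ∀ Λ : Set ℂ, Λ.Nonempty → Λ ⊆ {z ∈ spectrumC P | 0 ≤ z.im} \ {1} →
    ∀ L : ℝ, (∀ z ∈ Λ, ‖z‖ = L) →
      ({z ∈ Λ | z.im = 0}.Subsingleton ∧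
        RatIndepWith (Real.logb 10 L)
          (((fun z : ℂ => Complex.arg z / (2 * Real.pi)) '' Λ) \ {0, 1/2}))



noncomputable def cl (u : ℝ) : ℝ := min (max u 0) 1

lemma cl_mono : Monotone cl := fun _ _ h => min_le_min (max_le_max h le_rfl) le_rfl

lemma cl_lip {a b : ℝ} (h : a ≤ b) : cl b - cl a ≤ b - a := by
  simp only [cl, min_def, max_def]; split_ifs <;> linarith

lemma cl_of_nonpos {u : ℝ} (h : u ≤ 0) : cl u = 0 := by
  simp only [cl, min_def, max_def]; split_ifs <;> linarith

lemma cl_of_one_le {u : ℝ} (h : 1 ≤ u) : cl u = 1 := by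
  simp only [cl, min_def, max_def]; split_ifs <;> linarith

lemma cl_eq_self {u : ℝ} (h0 : 0 ≤ u) (h1 : u ≤ 1) : cl u = u := by
  simp only [cl, min_def, max_def]; split_ifs <;> linarith

noncomputable def cnt (p : ℕ → Prop) (N : ℕ) : ℝ := ((Finset.Icc 1 N).filter p).card

def DT (p : ℕ → Prop) (c : ℝ) : Prop :=
  Tendsto (fun N : ℕ => cnt p N / (N : ℝ)) atTop (𝓝 c)

lemma cnt_eq (p : ℕ → Prop) [inst : DecidablePred p] (N : ℕ) :
    cnt p N = ((Finset.Icc 1 N).filter p).card := by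
  have h : (fun a => Classical.propDecidable (p a)) = inst := funext fun a => Subsingleton.elim _ _
  unfold cnt
  rw [h]

lemma dt_iff (p : ℕ → Prop) [DecidablePred p] (c : ℝ) :
    Tendsto (fun N : ℕ => (((Finset.Icc 1 N).filter p).card : ℝ) / (N : ℝ)) atTop (𝓝 c) ↔
      DT p c := by
  unfold DT
  simp only [cnt_eq]

lemma DT_congr {p q : ℕ → Prop} {c : ℝ} (h : ∀ n, p n ↔ q n) (hp : DT p c) : DT q c := by
  have : p = q := funext fun n => propext (h n)
  rwa [← this]

lemma cnt_nonneg (p : ℕ → Prop) (N : ℕ) : 0 ≤ cnt p N := by unfold cnt; positivity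

lemma DT_false : DT (fun _ => False) 0 := by
  have : ∀ N, cnt (fun _ => False) N = 0 := by
    intro N; rw [cnt_eq]; simp
  simp only [DT, this, zero_div]
  exact tendsto_const_nhds

lemma cnt_add {p q : ℕ → Prop} (hd : ∀ n, ¬(p n ∧ q n)) (N : ℕ) :
    cnt (fun n => p n ∨ q n) N = cnt p N + cnt q N := by
  classical
  rw [cnt_eq, cnt_eq, cnt_eq]
  rw [Finset.filter_or, Finset.card_union_of_disjoint, Nat.cast_add]
  exact Finset.disjoint_left.mpr fun a ha hb =>
    hd a ⟨(Finset.mem_filter.mp ha).2, (Finset.mem_filter.mp hb).2⟩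

lemma cnt_mono {p q : ℕ → Prop} (h : ∀ n, p n → q n) (N : ℕ) : cnt p N ≤ cnt q N := by
  classical
  rw [cnt_eq, cnt_eq]
  exact_mod_cast Finset.card_le_card (Finset.monotone_filter_right _ (fun n _ hn => h n hn))

lemma cnt_le (p : ℕ → Prop) (N : ℕ) : cnt p N ≤ N := by
  classical
  rw [cnt_eq]
  calc ((Finset.Icc 1 N).filter p).card ≤ ((Finset.Icc 1 N).card : ℝ) := by
        exact_mod_cast Finset.card_filter_le _ _
    _ = N := by rw [Nat.card_Icc]; norm_num

lemma DT_add {p q : ℕ → Prop} {c d : ℝ} (hd : ∀ n, ¬(p n ∧ q n)) (hp : DT p c) (hq : DT q d) :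
    DT (fun n => p n ∨ q n) (c + d) := by
  refine Tendsto.congr (fun N => ?_) (hp.add hq)
  rw [cnt_add hd, add_div]

lemma DT_sub {p q : ℕ → Prop} {c e : ℝ} (hd : ∀ n, ¬(p n ∧ q n)) (hp : DT p c)
    (hpq : DT (fun n => p n ∨ q n) e) : DT q (e - c) := by
  refine Tendsto.congr (fun N => ?_) (hpq.sub hp)
  rw [cnt_add hd, add_div]; ring

lemma DT_le {p q : ℕ → Prop} (h : ∀ n, p n → q n) (N : ℕ) :
    cnt p N / (N : ℝ) ≤ cnt q N / (N : ℝ) := by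
  rcases Nat.eq_zero_or_pos N with hN | hN
  · simp [hN]
  · have hN' : (0 : ℝ) < N := by exact_mod_cast hN
    rw [div_le_div_iff_of_pos_right hN']
    exact cnt_mono h N

lemma DT_squeeze {p q r : ℕ → Prop} {c : ℝ} (hpq : ∀ n, p n → q n) (hqr : ∀ n, q n → r n)
    (hp : DT p c) (hr : DT r c) : DT q c :=
  tendsto_of_tendsto_of_tendsto_of_le_of_le hp hr (DT_le hpq) (DT_le hqr)

lemma DT_compl {p : ℕ → Prop} {c : ℝ} (hp : DT p c) : DT (fun n => ¬ p n) (1 - c) := by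
  have key : (fun N : ℕ => 1 - cnt p N / (N : ℝ)) =ᶠ[atTop]
      (fun N : ℕ => cnt (fun n => ¬ p n) N / (N : ℝ)) := by
    filter_upwards [eventually_ge_atTop 1] with N hN
    classical
    have hN0 : (N : ℝ) ≠ 0 := by positivity
    have h1 : cnt (fun n => ¬ p n) N = N - cnt p N := by
      rw [cnt_eq, cnt_eq, Finset.filter_not]
      rw [Finset.card_sdiff_of_subset (Finset.filter_subset _ _)]
      have hle : ((Finset.Icc 1 N).filter p).card ≤ (Finset.Icc 1 N).card :=
        Finset.card_filter_le _ _
      push_cast [hle]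
      rw [Nat.card_Icc]; push_cast; ring
    rw [h1, sub_div, div_self hN0]
  exact Tendsto.congr' key (tendsto_const_nhds.sub hp)

lemma DT_small {q : ℕ → Prop}
    (h : ∀ ε : ℝ, 0 < ε → ∃ (r : ℕ → Prop) (cr : ℝ), (∀ n, q n → r n) ∧ DT r cr ∧ cr < ε) :
    DT q 0 := by
  rw [DT, NormedAddCommGroup.tendsto_nhds_zero]
  intro ε hε
  obtain ⟨r, cr, hqr, hr, hcr⟩ := h ε hε
  have hev : ∀ᶠ N : ℕ in atTop, cnt r N / (N : ℝ) < ε := hr.eventually_lt_const hcr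
  filter_upwards [hev] with N hN
  have h0 : (0:ℝ) ≤ cnt q N / N := div_nonneg (cnt_nonneg q N) (Nat.cast_nonneg N)
  rw [Real.norm_eq_abs, abs_of_nonneg h0]
  exact lt_of_le_of_lt (DT_le hqr N) hN

lemma DT_sum {ι : Type*} (s : Finset ι) (p : ι → ℕ → Prop) (c : ι → ℝ)
    (hd : ∀ i ∈ s, ∀ j ∈ s, i ≠ j → ∀ n, ¬(p i n ∧ p j n))
    (h : ∀ i ∈ s, DT (p i) (c i)) :
    DT (fun n => ∃ i ∈ s, p i n) (∑ i ∈ s, c i) := by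
  classical
  induction s using Finset.induction_on with
  | empty =>
    rw [Finset.sum_empty]
    exact DT_congr (fun n => by simp) DT_false
  | @insert a s ha ih =>
    have hadd := DT_add (p := p a) (q := fun n => ∃ i ∈ s, p i n)
      (fun n hn => by
        obtain ⟨hpa, i, hi, hpi⟩ := hn
        exact hd a (Finset.mem_insert_self a s) i (Finset.mem_insert_of_mem hi)
          (fun h' => ha (h' ▸ hi)) n ⟨hpa, hpi⟩)
      (h a (Finset.mem_insert_self a s))
      (ih (fun i hi j hj hij => hd i (Finset.mem_insert_of_mem hi) j
            (Finset.mem_insert_of_mem hj) hij)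
        (fun i hi => h i (Finset.mem_insert_of_mem hi)))
    rw [Finset.sum_insert ha]
    refine DT_congr (fun n => ?_) hadd
    simp [Finset.mem_insert, or_and_right, exists_or]

def CDF (G : ℕ → Prop) (v : ℕ → ℝ) : Prop :=
  ∀ u : ℝ, DT (fun n => G n ∧ Int.fract (v n) ≤ u) (cl u)

lemma CDF_congr_fun {G : ℕ → Prop} {v w : ℕ → ℝ} (h : ∀ n, v n = w n) (hv : CDF G v) :
    CDF G w := by
  have : v = w := funext h
  rwa [← this]

lemma CDF_G {G : ℕ → Prop} {v : ℕ → ℝ} (h : CDF G v) : DT G 1 := by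
  have h1 := h 1
  rw [cl_of_one_le le_rfl] at h1
  exact DT_congr (fun n => ⟨fun hn => hn.1, fun hn => ⟨hn, (Int.fract_lt_one _).le⟩⟩) h1

lemma CDF_Ioc {G : ℕ → Prop} {v : ℕ → ℝ} (h : CDF G v) {a b : ℝ} (hab : a ≤ b) :
    DT (fun n => G n ∧ Int.fract (v n) ∈ Set.Ioc a b) (cl b - cl a) := by
  refine DT_sub (p := fun n => G n ∧ Int.fract (v n) ≤ a) ?_ (h a) ?_
  · rintro n ⟨⟨-, h1⟩, ⟨-, h2, -⟩⟩; exact absurd h1 (not_le.mpr h2)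
  · refine DT_congr (fun n => ?_) (h b)
    constructor
    · rintro ⟨hG, hle⟩
      rcases le_or_gt (Int.fract (v n)) a with h'|h'
      · exact Or.inl ⟨hG, h'⟩
      · exact Or.inr ⟨hG, h', hle⟩
    · rintro (⟨hG, h'⟩|⟨hG, -, h'⟩) <;> exact ⟨hG, le_trans h' (by first | exact hab | rfl)⟩

lemma CDF_point {G : ℕ → Prop} {v : ℕ → ℝ} (h : CDF G v) (a : ℝ) :
    DT (fun n => G n ∧ Int.fract (v n) = a) 0 := by
  apply DT_small
  intro ε hε
  refine ⟨fun n => G n ∧ Int.fract (v n) ∈ Set.Ioc (a - ε/2) a, cl a - cl (a - ε/2),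
    ?_, CDF_Ioc h (by linarith), ?_⟩
  · rintro n ⟨hG, he⟩; exact ⟨hG, by rw [he]; constructor <;> [linarith; rfl]⟩
  · have := cl_lip (show a - ε/2 ≤ a by linarith); linarith

lemma CDF_Icc {G : ℕ → Prop} {v : ℕ → ℝ} (h : CDF G v) {a b : ℝ} (hab : a ≤ b) :
    DT (fun n => G n ∧ Int.fract (v n) ∈ Set.Icc a b) (cl b - cl a) := by
  have hadd := DT_add (p := fun n => G n ∧ Int.fract (v n) = a)
    (q := fun n => G n ∧ Int.fract (v n) ∈ Set.Ioc a b)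
    (fun n hn => by obtain ⟨⟨-, h1⟩, ⟨-, h2, -⟩⟩ := hn; rw [h1] at h2; exact lt_irrefl a h2)
    (CDF_point h a) (CDF_Ioc h hab)
  rw [zero_add] at hadd
  refine DT_congr (fun n => ?_) hadd
  constructor
  · rintro (⟨hG, he⟩|⟨hG, h1, h2⟩)
    · exact ⟨hG, by rw [he]; exact ⟨le_rfl, hab⟩⟩
    · exact ⟨hG, h1.le, h2⟩
  · rintro ⟨hG, h1, h2⟩
    rcases eq_or_lt_of_le h1 with h'|h'
    · exact Or.inl ⟨hG, h'.symm⟩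
    · exact Or.inr ⟨hG, h', h2⟩

lemma CDF_of_core {G : ℕ → Prop} {w : ℕ → ℝ} (hG : DT G 1)
    (hcore : ∀ u : ℝ, 0 ≤ u → u < 1 → DT (fun n => G n ∧ Int.fract (w n) ≤ u) u) :
    CDF G w := by
  intro u
  rcases lt_or_ge u 0 with hu | hu
  · rw [cl_of_nonpos hu.le]
    refine DT_congr (fun n => ?_) DT_false
    simp only [false_iff]
    rintro ⟨-, hle⟩
    exact absurd (lt_of_le_of_lt hle hu) (not_lt.mpr (Int.fract_nonneg _))
  · rcases lt_or_ge u 1 with hu1 | hu1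
    · rw [cl_eq_self hu hu1.le]; exact hcore u hu hu1
    · rw [cl_of_one_le hu1]
      exact DT_congr (fun n => ⟨fun hn => ⟨hn, le_trans (Int.fract_lt_one _).le hu1⟩,
        fun hn => hn.1⟩) hG

lemma CDF_shift {G : ℕ → Prop} {v : ℕ → ℝ} (h : CDF G v) (c : ℝ) :
    CDF G (fun n => c + v n) := by
  set γ := Int.fract c with hγ
  have hγ0 : 0 ≤ γ := Int.fract_nonneg c
  have hγ1 : γ < 1 := Int.fract_lt_one c
  refine CDF_of_core (CDF_G h) (fun u hu0 hu1 => ?_)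
  have hkey : ∀ n, (G n ∧ Int.fract (c + v n) ≤ u) ↔
      ((G n ∧ Int.fract (v n) ∈ Set.Icc (-γ) (u - γ)) ∨
       (G n ∧ Int.fract (v n) ∈ Set.Icc (1 - γ) (1 + u - γ))) := by
    intro n
    set t := Int.fract (v n) with ht
    have ht0 : 0 ≤ t := Int.fract_nonneg _
    have ht1 : t < 1 := Int.fract_lt_one _
    have hrw : Int.fract (c + v n) = Int.fract (γ + t) := by
      have heq : c + v n = (γ + t) + ((⌊c⌋ + ⌊v n⌋ : ℤ) : ℝ) := by
        simp only [hγ, ht, Int.fract]; push_cast; ring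
      rw [heq, Int.fract_add_intCast]
    rw [hrw]
    rcases lt_or_ge (γ + t) 1 with hc | hc
    · rw [Int.fract_eq_self.mpr ⟨by linarith, hc⟩]
      constructor
      · rintro ⟨hG, hle⟩
        exact Or.inl ⟨hG, ⟨by linarith, by linarith⟩⟩
      · rintro (⟨hG, h1, h2⟩|⟨hG, h1, h2⟩)
        · exact ⟨hG, by linarith⟩
        · exact ⟨hG, by linarith⟩
    · have hfr : Int.fract (γ + t) = γ + t - 1 := by
        have h3 : Int.fract (γ + t) = Int.fract (γ + t - 1) := by
          rw [show γ + t - 1 = γ + t + ((-1 : ℤ) : ℝ) by push_cast; ring, Int.fract_add_intCast]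
        rw [h3, Int.fract_eq_self.mpr ⟨by linarith, by linarith⟩]
      rw [hfr]
      constructor
      · rintro ⟨hG, hle⟩
        exact Or.inr ⟨hG, ⟨by linarith, by linarith⟩⟩
      · rintro (⟨hG, h1, h2⟩|⟨hG, h1, h2⟩)
        · exact ⟨hG, by linarith⟩
        · exact ⟨hG, by linarith⟩
  have hd : ∀ n, ¬((G n ∧ Int.fract (v n) ∈ Set.Icc (-γ) (u - γ)) ∧
      (G n ∧ Int.fract (v n) ∈ Set.Icc (1 - γ) (1 + u - γ))) := by
    rintro n ⟨⟨-, -, h1⟩, ⟨-, h2, -⟩⟩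
    linarith
  have hadd := DT_add hd (CDF_Icc h (by linarith : -γ ≤ u - γ))
    (CDF_Icc h (by linarith : 1 - γ ≤ 1 + u - γ))
  have hval : (cl (u - γ) - cl (-γ)) + (cl (1 + u - γ) - cl (1 - γ)) = u := by
    have e1 : cl (-γ) = 0 := cl_of_nonpos (by linarith)
    have e2 : cl (1 - γ) = 1 - γ := cl_eq_self (by linarith) (by linarith)
    rcases le_total γ u with hgu | hgu
    · have e3 : cl (u - γ) = u - γ := cl_eq_self (by linarith) (by linarith)
      have e4 : cl (1 + u - γ) = 1 := cl_of_one_le (by linarith)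
      rw [e1, e2, e3, e4]; ring
    · have e3 : cl (u - γ) = 0 := cl_of_nonpos (by linarith)
      have e4 : cl (1 + u - γ) = 1 + u - γ := cl_eq_self (by linarith) (by linarith)
      rw [e1, e2, e3, e4]; ring
  rw [hval] at hadd
  exact DT_congr (fun n => (hkey n).symm) hadd

lemma CDF_nsmul {G : ℕ → Prop} {v : ℕ → ℝ} (h : CDF G v) (k : ℕ) (hk : 0 < k) :
    CDF G (fun n => (k : ℝ) * v n) := by
  have hk' : (0 : ℝ) < k := by exact_mod_cast hk
  refine CDF_of_core (CDF_G h) (fun u hu0 hu1 => ?_)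
  have hkey : ∀ n, (G n ∧ Int.fract ((k : ℝ) * v n) ≤ u) ↔
      (∃ j ∈ Finset.range k, G n ∧
        Int.fract (v n) ∈ Set.Icc ((j : ℝ) / k) (((j : ℝ) + u) / k)) := by
    intro n
    set t := Int.fract (v n) with ht
    have ht0 : 0 ≤ t := Int.fract_nonneg _
    have ht1 : t < 1 := Int.fract_lt_one _
    have hrw : Int.fract ((k : ℝ) * v n) = Int.fract ((k : ℝ) * t) := by
      have heq : (k : ℝ) * v n = (k : ℝ) * t + ((k * ⌊v n⌋ : ℤ) : ℝ) := by
        simp only [ht, Int.fract]; push_cast; ring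
      rw [heq, Int.fract_add_intCast]
    rw [hrw]
    constructor
    · rintro ⟨hG, hle⟩
      have h0 : (0 : ℝ) ≤ (k : ℝ) * t := by positivity
      have hfl0 : 0 ≤ ⌊(k : ℝ) * t⌋ := Int.floor_nonneg.mpr h0
      set j : ℕ := (⌊(k : ℝ) * t⌋).toNat with hj
      have hjc : ((j : ℝ)) = ((⌊(k : ℝ) * t⌋ : ℤ) : ℝ) := by
        exact_mod_cast congrArg (fun z : ℤ => (z : ℝ)) (Int.toNat_of_nonneg hfl0)
      have hjle : ((j : ℝ)) ≤ (k : ℝ) * t := by rw [hjc]; exact Int.floor_le _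
      have hjlt : (k : ℝ) * t < k := by nlinarith
      have hjk : j < k := by
        have : ((j : ℝ)) < k := lt_of_le_of_lt hjle hjlt
        exact_mod_cast this
      have hfr : Int.fract ((k : ℝ) * t) = (k : ℝ) * t - j := by
        rw [Int.fract, hjc]
      refine ⟨j, Finset.mem_range.mpr hjk, hG, ?_, ?_⟩
      · rw [div_le_iff₀ hk']; linarith
      · rw [le_div_iff₀ hk']; rw [hfr] at hle; linarith
    · rintro ⟨j, hj, hG, h1, h2⟩
      have hjk : j < k := Finset.mem_range.mp hj
      rw [div_le_iff₀ hk'] at h1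
      rw [le_div_iff₀ hk'] at h2
      have hfl : ⌊(k : ℝ) * t⌋ = (j : ℤ) := by
        apply Int.floor_eq_iff.mpr
        constructor
        · push_cast; linarith
        · push_cast; linarith
      refine ⟨hG, ?_⟩
      rw [Int.fract, hfl]
      push_cast; linarith
  have hd : ∀ i ∈ Finset.range k, ∀ j ∈ Finset.range k, i ≠ j → ∀ n,
      ¬((G n ∧ Int.fract (v n) ∈ Set.Icc ((i : ℝ) / k) (((i : ℝ) + u) / k)) ∧
        (G n ∧ Int.fract (v n) ∈ Set.Icc ((j : ℝ) / k) (((j : ℝ) + u) / k))) := by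
    have key : ∀ i j : ℕ, i < j → ∀ n,
        ¬((G n ∧ Int.fract (v n) ∈ Set.Icc ((i : ℝ) / k) (((i : ℝ) + u) / k)) ∧
          (G n ∧ Int.fract (v n) ∈ Set.Icc ((j : ℝ) / k) (((j : ℝ) + u) / k))) := by
      rintro i j hij n ⟨⟨-, -, h1⟩, ⟨-, h2, -⟩⟩
      have hij' : (i : ℝ) + 1 ≤ j := by exact_mod_cast hij
      have hlt : ((i : ℝ) + u) / k < (j : ℝ) / k := by
        rw [div_lt_div_iff_of_pos_right hk']; linarith
      linarith
    intro i hi j hj hij n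
    rcases lt_or_gt_of_ne hij with h' | h'
    · exact key i j h' n
    · intro hab; exact key j i h' n ⟨hab.2, hab.1⟩
  have hadd := DT_sum (Finset.range k)
    (fun j n => G n ∧ Int.fract (v n) ∈ Set.Icc ((j : ℝ) / k) (((j : ℝ) + u) / k))
    (fun j => cl (((j : ℝ) + u) / k) - cl ((j : ℝ) / k)) hd
    (fun j _ => CDF_Icc h (by rw [div_le_div_iff_of_pos_right hk']; linarith))
  have hsum : (∑ j ∈ Finset.range k, (cl (((j : ℝ) + u) / k) - cl ((j : ℝ) / k))) = u := by
    have hterm : ∀ j ∈ Finset.range k, cl (((j : ℝ) + u) / k) - cl ((j : ℝ) / k) = u / k := by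
      intro j hj
      have hjk : (j : ℝ) + 1 ≤ k := by exact_mod_cast Finset.mem_range.mp hj
      have hj0 : (0:ℝ) ≤ j := Nat.cast_nonneg j
      rw [cl_eq_self (div_nonneg (by linarith) hk'.le) (by rw [div_le_one hk']; linarith),
          cl_eq_self (div_nonneg hj0 hk'.le) (by rw [div_le_one hk']; linarith)]
      rw [div_sub_div_same, add_sub_cancel_left]
    rw [Finset.sum_congr rfl hterm, Finset.sum_const, Finset.card_range, nsmul_eq_mul]
    field_simp
  rw [hsum] at hadd
  exact DT_congr (fun n => (hkey n).symm) hadd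

lemma CDF_neg {G : ℕ → Prop} {v : ℕ → ℝ} (h : CDF G v) : CDF G (fun n => -(v n)) := by
  refine CDF_of_core (CDF_G h) (fun u hu0 hu1 => ?_)
  have hkey : ∀ n, (G n ∧ Int.fract (-(v n)) ≤ u) ↔
      ((G n ∧ Int.fract (v n) = 0) ∨ (G n ∧ Int.fract (v n) ∈ Set.Icc (1 - u) 1)) := by
    intro n
    by_cases ht : Int.fract (v n) = 0
    · have hneg : Int.fract (-(v n)) = 0 := by
        rw [Int.fract_neg_eq_zero]; exact ht
      rw [hneg]
      constructor
      · rintro ⟨hG, -⟩; exact Or.inl ⟨hG, ht⟩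
      · rintro (⟨hG, -⟩|⟨hG, -⟩) <;> exact ⟨hG, hu0⟩
    · have hneg : Int.fract (-(v n)) = 1 - Int.fract (v n) := Int.fract_neg ht
      have ht1 : Int.fract (v n) < 1 := Int.fract_lt_one _
      rw [hneg]
      constructor
      · rintro ⟨hG, hle⟩
        exact Or.inr ⟨hG, by linarith, ht1.le⟩
      · rintro (⟨hG, h'⟩|⟨hG, h1, h2⟩)
        · exact absurd h' ht
        · exact ⟨hG, by linarith⟩
  have hd : ∀ n, ¬((G n ∧ Int.fract (v n) = 0) ∧
      (G n ∧ Int.fract (v n) ∈ Set.Icc (1 - u) 1)) := by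
    rintro n ⟨⟨-, h1⟩, ⟨-, h2, -⟩⟩
    rw [h1] at h2; linarith
  have hadd := DT_add hd (CDF_point h 0) (CDF_Icc h (by linarith : 1 - u ≤ 1))
  rw [zero_add, cl_of_one_le le_rfl, cl_eq_self (by linarith) (by linarith)] at hadd
  have : 1 - (1 - u) = u := by ring
  rw [this] at hadd
  exact DT_congr (fun n => (hkey n).symm) hadd

lemma CDF_zsmul {G : ℕ → Prop} {v : ℕ → ℝ} (h : CDF G v) (k : ℤ) (hk : k ≠ 0) :
    CDF G (fun n => (k : ℝ) * v n) := by
  rcases lt_or_gt_of_ne hk with hneg | hpos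
  · have h1 := CDF_nsmul h (-k).toNat (by omega)
    have h2 := CDF_neg h1
    refine CDF_congr_fun (fun n => ?_) h2
    have hc : (((-k).toNat : ℝ)) = -(k : ℝ) := by
      have := Int.toNat_of_nonneg (by omega : (0:ℤ) ≤ -k)
      exact_mod_cast congrArg (fun z : ℤ => (z : ℝ)) this
    rw [hc]; ring
  · have h1 := CDF_nsmul h k.toNat (by omega)
    refine CDF_congr_fun (fun n => ?_) h1
    have hc : ((k.toNat : ℝ)) = (k : ℝ) := by
      have := Int.toNat_of_nonneg (by omega : (0:ℤ) ≤ k)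
      exact_mod_cast congrArg (fun z : ℤ => (z : ℝ)) this
    rw [hc]


lemma signif_le_iff {r t : ℝ} (hr : 0 < r) (ht1 : 1 ≤ t) (ht10 : t < 10) :
    signif r ≤ t ↔ Int.fract (Real.logb 10 r) ≤ Real.logb 10 t := by
  have h10 : (1:ℝ) < 10 := by norm_num
  have ht0 : 0 < t := by linarith
  rw [signif, if_neg hr.ne']
  have hrL : (10:ℝ) ^ (Real.logb 10 r) = r := Real.rpow_logb (by norm_num) (by norm_num) hr
  have hfr : r / (10:ℝ) ^ (⌊Real.logb 10 r⌋) = (10:ℝ) ^ (Int.fract (Real.logb 10 r)) := by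
    rw [Int.fract, Real.rpow_sub (by norm_num : (0:ℝ) < 10), hrL, Real.rpow_intCast]
  have htL : (10:ℝ) ^ (Real.logb 10 t) = t := Real.rpow_logb (by norm_num) (by norm_num) ht0
  rw [hfr]
  nth_rewrite 1 [← htL]
  exact Real.rpow_le_rpow_left_iff h10


/-- if `(x n)` is Benford then so is `(α * x n ^ k)` for `α ≠ 0`, `k ≠ 0`
(`zpow` on `ℝ` satisfies `(0:ℝ) ^ k = 0` for `k ≠ 0`). -/
theorem benford_smul_zpow (x : ℕ → ℝ) (hx : BenfordSeq x) (α : ℝ) (k : ℤ)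
    (hα : α ≠ 0) (hk : k ≠ 0) :
    BenfordSeq (fun n => α * x n ^ k) := by
  have h10 : (1:ℝ) < 10 := by norm_num
  have hxDT : ∀ t : ℝ, 1 ≤ t → t < 10 →
      DT (fun n => signif |x n| ≤ t) (Real.logb 10 t) := by
    intro t h1 h2
    exact (dt_iff _ _).mp (hx t h1 h2)
  have hZ0 : DT (fun n => x n = 0) 0 := by
    have h1 := hxDT 1 le_rfl (by norm_num)
    rw [Real.logb_one] at h1
    refine DT_squeeze (p := fun _ => False) (fun n h => False.elim h) (fun n hn => ?_) DT_false h1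
    show signif |x n| ≤ 1
    rw [hn, abs_zero, signif, if_pos rfl]
    norm_num
  have hGnot : DT (fun n => ¬ x n = 0) 1 := by simpa using DT_compl hZ0
  have hcdf : CDF (fun n => ¬ x n = 0) (fun n => Real.logb 10 |x n|) := by
    refine CDF_of_core hGnot (fun u hu0 hu1 => ?_)
    have ht1 : (1:ℝ) ≤ (10:ℝ) ^ u := by
      have := (Real.rpow_le_rpow_left_iff h10).mpr hu0
      rwa [Real.rpow_zero] at this
    have ht10 : (10:ℝ) ^ u < 10 := by
      have := (Real.rpow_lt_rpow_left_iff h10).mpr hu1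
      rwa [Real.rpow_one] at this
    have hlogt : Real.logb 10 ((10:ℝ) ^ u) = u := Real.logb_rpow (by norm_num) (by norm_num)
    have hD := hxDT _ ht1 ht10
    rw [hlogt] at hD
    have hsplit : ∀ n, (signif |x n| ≤ (10:ℝ) ^ u) ↔
        (x n = 0 ∨ (¬ x n = 0 ∧ Int.fract (Real.logb 10 |x n|) ≤ u)) := by
      intro n
      by_cases hzn : x n = 0
      · have hL : signif |x n| = 0 := by rw [hzn, abs_zero, signif, if_pos rfl]
        rw [hL]
        exact ⟨fun _ => Or.inl hzn, fun _ => by linarith⟩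
      · have habs : 0 < |x n| := abs_pos.mpr hzn
        rw [signif_le_iff habs ht1 ht10, hlogt]
        constructor
        · intro h'; exact Or.inr ⟨hzn, h'⟩
        · rintro (h'|⟨-, h'⟩)
          · exact absurd h' hzn
          · exact h'
    have hsub := DT_sub (p := fun n => x n = 0)
      (q := fun n => ¬ x n = 0 ∧ Int.fract (Real.logb 10 |x n|) ≤ u)
      (fun n hn => hn.2.1 hn.1) hZ0 (DT_congr hsplit hD)
    simpa using hsub
  have hfinal : CDF (fun n => ¬ x n = 0)
      (fun n => Real.logb 10 |α| + (k:ℝ) * Real.logb 10 |x n|) :=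
    CDF_shift (CDF_zsmul hcdf k hk) _
  intro t ht1 ht10
  have ht0 : 0 < t := by linarith
  have hu0 : 0 ≤ Real.logb 10 t := Real.logb_nonneg h10 ht1
  have hu1 : Real.logb 10 t < 1 := by
    have := Real.logb_lt_logb h10 ht0 ht10
    rwa [Real.logb_self_eq_one h10] at this
  have hDu := hfinal (Real.logb 10 t)
  rw [cl_eq_self hu0 hu1.le] at hDu
  have hor := DT_add (p := fun n => x n = 0)
    (q := fun n => ¬ x n = 0 ∧
      Int.fract (Real.logb 10 |α| + (k:ℝ) * Real.logb 10 |x n|) ≤ Real.logb 10 t)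
    (fun n hn => hn.2.1 hn.1) hZ0 hDu
  rw [zero_add] at hor
  have hEq : ∀ n, (x n = 0 ∨ (¬ x n = 0 ∧
      Int.fract (Real.logb 10 |α| + (k:ℝ) * Real.logb 10 |x n|) ≤ Real.logb 10 t)) ↔
      (signif |α * x n ^ k| ≤ t) := by
    intro n
    by_cases hzn : x n = 0
    · have hzz : α * x n ^ k = 0 := by rw [hzn, zero_zpow k hk, mul_zero]
      have hL : signif |α * x n ^ k| = 0 := by rw [hzz, abs_zero, signif, if_pos rfl]
      rw [hL]
      exact ⟨fun _ => by linarith, fun _ => Or.inl hzn⟩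
    · have hxk : α * x n ^ k ≠ 0 := mul_ne_zero hα (zpow_ne_zero k hzn)
      have habs : 0 < |α * x n ^ k| := abs_pos.mpr hxk
      rw [signif_le_iff habs ht1 ht10]
      have hlog : Real.logb 10 |α * x n ^ k|
          = Real.logb 10 |α| + (k:ℝ) * Real.logb 10 |x n| := by
        have habs2 : |x n ^ k| = |x n| ^ k := by
          obtain ⟨m, rfl | rfl⟩ := k.eq_nat_or_neg
          · rw [zpow_natCast, zpow_natCast, abs_pow]
          · rw [zpow_neg, zpow_neg, abs_inv, zpow_natCast, zpow_natCast, abs_pow]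
        have hlz : Real.logb 10 (|x n| ^ k) = (k : ℝ) * Real.logb 10 |x n| := by
          rw [Real.logb, Real.logb, Real.log_zpow]; ring
        rw [abs_mul, habs2,
          Real.logb_mul (abs_ne_zero.mpr hα) (zpow_ne_zero k (abs_ne_zero.mpr hzn)), hlz]
      rw [hlog]
      constructor
      · rintro (h'|⟨-, h'⟩)
        · exact absurd h' hzn
        · exact h'
      · intro h'; exact Or.inr ⟨hzn, h'⟩
  exact (dt_iff _ _).mpr (DT_congr hEq hor)
end

section
/- Let d > 1 and let P be a d×d row-stochastic matrix that is irreducible and aperiodic. Then 1 is an eigenvalue of P, every eigenvalue λ ≠ 1 of P satisfies |λ| < 1, and there exists a row-stochastic matrix P* such that P^n converges entrywise to P* as n → ∞. -/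
open Filter Topology MeasureTheory
open scoped Classical

section PFAux

lemma my_eval_charpoly {n : Type*} [Fintype n] [DecidableEq n] {R : Type*} [CommRing R]
    (M : Matrix n n R) (t : R) : M.charpoly.eval t = (t • (1 : Matrix n n R) - M).det := by
  rw [Matrix.charpoly, ← Polynomial.coe_evalRingHom, RingHom.map_det]
  congr 1
  ext i j
  by_cases h : i = j <;>
    simp [h, RingHom.mapMatrix_apply, Matrix.charmatrix_apply, Matrix.one_apply,
      Matrix.smul_apply, Matrix.sub_apply, Matrix.diagonal]

lemma rs_mul {d : ℕ} {P Q : Matrix (Fin d) (Fin d) ℝ} (hP : RowStochastic P)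
    (hQ : RowStochastic Q) : RowStochastic (P * Q) := by
  constructor
  · intro i j
    rw [Matrix.mul_apply]
    exact Finset.sum_nonneg fun k _ => mul_nonneg (hP.1 i k) (hQ.1 k j)
  · intro i
    simp only [Matrix.mul_apply]
    rw [Finset.sum_comm]
    calc ∑ k, ∑ j, P i k * Q k j = ∑ k, P i k * ∑ j, Q k j := by
          simp [Finset.mul_sum]
      _ = 1 := by simp only [hQ.2, mul_one]; exact hP.2 i

lemma rs_pow {d : ℕ} {P : Matrix (Fin d) (Fin d) ℝ} (hP : RowStochastic P) (n : ℕ) :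
    RowStochastic (P ^ n) := by
  induction n with
  | zero =>
    constructor
    · intro i j
      by_cases h : i = j <;> simp [h, Matrix.one_apply]
    · intro i; simp [Matrix.one_apply]
  | succ n ih => rw [pow_succ]; exact rs_mul ih hP

lemma step_sup {d : ℕ} (ne : (Finset.univ : Finset (Fin d)).Nonempty)
    {A : Matrix (Fin d) (Fin d) ℝ} (hA : RowStochastic A) (v : Fin d → ℝ) (i : Fin d) :
    ∑ k, A i k * v k ≤ Finset.univ.sup' ne v := by
  calc ∑ k, A i k * v k ≤ ∑ k, A i k * Finset.univ.sup' ne v :=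
        Finset.sum_le_sum fun k _ =>
          mul_le_mul_of_nonneg_left (Finset.le_sup' v (Finset.mem_univ k)) (hA.1 i k)
    _ = Finset.univ.sup' ne v := by rw [← Finset.sum_mul, hA.2 i, one_mul]

lemma step_inf {d : ℕ} (ne : (Finset.univ : Finset (Fin d)).Nonempty)
    {A : Matrix (Fin d) (Fin d) ℝ} (hA : RowStochastic A) (v : Fin d → ℝ) (i : Fin d) :
    Finset.univ.inf' ne v ≤ ∑ k, A i k * v k := by
  calc Finset.univ.inf' ne v = ∑ k, A i k * Finset.univ.inf' ne v := by
        rw [← Finset.sum_mul, hA.2 i, one_mul]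
    _ ≤ ∑ k, A i k * v k :=
        Finset.sum_le_sum fun k _ =>
          mul_le_mul_of_nonneg_left (Finset.inf'_le v (Finset.mem_univ k)) (hA.1 i k)

lemma step_osc {d : ℕ} (ne : (Finset.univ : Finset (Fin d)).Nonempty)
    {A : Matrix (Fin d) (Fin d) ℝ} (hA : RowStochastic A) {ε : ℝ}
    (hε : ∀ i j, ε ≤ A i j) (v : Fin d → ℝ) :
    Finset.univ.sup' ne (fun i => ∑ k, A i k * v k)
      - Finset.univ.inf' ne (fun i => ∑ k, A i k * v k)
      ≤ (1 - 2 * ε) * (Finset.univ.sup' ne v - Finset.univ.inf' ne v) := by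
  set S := Finset.univ.sup' ne v with hS
  set I := Finset.univ.inf' ne v with hI
  obtain ⟨jm, -, hjm⟩ := Finset.exists_mem_eq_inf' ne v
  obtain ⟨jM, -, hjM⟩ := Finset.exists_mem_eq_sup' ne v
  have hIS : I ≤ S := le_trans (Finset.inf'_le v (Finset.mem_univ jM)) (Finset.le_sup' v (Finset.mem_univ jM))
  have key : ∀ i, ε * (S - I) ≤ ∑ k, A i k * (S - v k) := by
    intro i
    calc ε * (S - I) ≤ A i jm * (S - v jm) := by
          rw [hI, hjm]
          exact mul_le_mul_of_nonneg_right (hε i jm) (by linarith)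
      _ ≤ ∑ k, A i k * (S - v k) :=
          Finset.single_le_sum (fun k _ => mul_nonneg (hA.1 i k)
            (sub_nonneg.2 (Finset.le_sup' v (Finset.mem_univ k)))) (Finset.mem_univ jm)
  have key2 : ∀ i, ε * (S - I) ≤ ∑ k, A i k * (v k - I) := by
    intro i
    calc ε * (S - I) ≤ A i jM * (v jM - I) := by
          rw [hS, hjM]
          exact mul_le_mul_of_nonneg_right (hε i jM) (by linarith)
      _ ≤ ∑ k, A i k * (v k - I) :=
          Finset.single_le_sum (fun k _ => mul_nonneg (hA.1 i k)
            (sub_nonneg.2 (Finset.inf'_le v (Finset.mem_univ k)))) (Finset.mem_univ jM)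
  have expand : ∀ i, ∑ k, A i k * (S - v k) = S - ∑ k, A i k * v k := by
    intro i
    simp only [mul_sub]
    rw [Finset.sum_sub_distrib, ← Finset.sum_mul, hA.2 i, one_mul]
  have expand2 : ∀ i, ∑ k, A i k * (v k - I) = (∑ k, A i k * v k) - I := by
    intro i
    simp only [mul_sub]
    rw [Finset.sum_sub_distrib, ← Finset.sum_mul, hA.2 i, one_mul]
  have hup : Finset.univ.sup' ne (fun i => ∑ k, A i k * v k) ≤ S - ε * (S - I) := by
    apply Finset.sup'_le
    intro i _
    have := key i; rw [expand i] at this; linarith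
  have hdown : I + ε * (S - I) ≤ Finset.univ.inf' ne (fun i => ∑ k, A i k * v k) := by
    apply Finset.le_inf'
    intro i _
    have := key2 i; rw [expand2 i] at this; linarith
  have : (1 - 2 * ε) * (S - I) = (S - ε * (S - I)) - (I + ε * (S - I)) := by ring
  rw [this]
  linarith

lemma column_limit {d : ℕ} (hd : 1 < d) {P : Matrix (Fin d) (Fin d) ℝ}
    (hP : RowStochastic P) {m : ℕ} (hm : 0 < m) (hpos : ∀ i j, 0 < (P ^ m) i j)
    (j : Fin d) : ∃ L : ℝ, ∀ i, Tendsto (fun n => (P ^ n) i j) atTop (𝓝 L) := by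
  have ne : (Finset.univ : Finset (Fin d)).Nonempty := ⟨⟨0, by omega⟩, Finset.mem_univ _⟩
  set Q := P ^ m with hQ
  have hQs : RowStochastic Q := rs_pow hP m
  have nep : (Finset.univ : Finset (Fin d × Fin d)).Nonempty :=
    ⟨(⟨0, by omega⟩, ⟨0, by omega⟩), Finset.mem_univ _⟩
  set ε := Finset.univ.inf' nep (fun p : Fin d × Fin d => Q p.1 p.2) with hε
  have hε0 : 0 < ε := by
    rw [hε, Finset.lt_inf'_iff]
    exact fun p _ => hpos p.1 p.2
  have hεle : ∀ i k, ε ≤ Q i k := fun i k =>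
    Finset.inf'_le _ (Finset.mem_univ (i, k))
  have hfac : 1 - 2 * ε ≥ 0 := by
    have i0 : Fin d := ⟨0, by omega⟩
    have hsum : ∑ k, ε ≤ ∑ k, Q i0 k := Finset.sum_le_sum fun k _ => hεle i0 k
    rw [hQs.2 i0] at hsum
    simp only [Finset.sum_const, Finset.card_univ, Fintype.card_fin, nsmul_eq_mul] at hsum
    have : (2 : ℝ) ≤ (d : ℝ) := by exact_mod_cast hd
    nlinarith
  have hfac1 : 1 - 2 * ε < 1 := by linarith
  set c : ℕ → Fin d → ℝ := fun n i => (P ^ n) i j with hc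
  have hstep : ∀ k n i, c (k + n) i = ∑ l, (P ^ k) i l * c n l := by
    intro k n i
    simp only [hc, pow_add, Matrix.mul_apply]
  set Mx : ℕ → ℝ := fun n => Finset.univ.sup' ne (c n) with hMx
  set mn : ℕ → ℝ := fun n => Finset.univ.inf' ne (c n) with hmn
  have hMx_anti : Antitone Mx := by
    apply antitone_nat_of_succ_le
    intro n
    apply Finset.sup'_le
    intro i _
    rw [show n + 1 = 1 + n by omega, hstep 1 n i]
    have := step_sup ne (rs_pow hP 1) (c n) i
    simpa only [pow_one] using this
  have hmn_mono : Monotone mn := by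
    apply monotone_nat_of_le_succ
    intro n
    apply Finset.le_inf'
    intro i _
    rw [show n + 1 = 1 + n by omega, hstep 1 n i]
    have := step_inf ne (rs_pow hP 1) (c n) i
    simpa only [pow_one] using this
  have hmem : ∀ n i, mn n ≤ c n i ∧ c n i ≤ Mx n := fun n i =>
    ⟨Finset.inf'_le _ (Finset.mem_univ i), Finset.le_sup' _ (Finset.mem_univ i)⟩
  set osc : ℕ → ℝ := fun n => Mx n - mn n with hosc
  have hosc_nonneg : ∀ n, 0 ≤ osc n := by
    intro n
    have := hmem n ⟨0, by omega⟩
    simp only [hosc]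
    linarith [this.1, this.2]
  have hosc_anti : Antitone osc := fun a b hab =>
    sub_le_sub (hMx_anti hab) (hmn_mono hab)
  have hcontr : ∀ n, osc (m + n) ≤ (1 - 2 * ε) * osc n := by
    intro n
    have h := step_osc ne hQs hεle (c n)
    have e1 : (fun i => ∑ k, Q i k * c n k) = c (m + n) := by
      funext i; rw [hstep m n i]
    rw [e1] at h
    exact h
  have hiter : ∀ k, osc (k * m) ≤ (1 - 2 * ε) ^ k * osc 0 := by
    intro k
    induction k with
    | zero => simp
    | succ k ih =>
      have : (k + 1) * m = m + k * m := by ring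
      rw [this]
      calc osc (m + k * m) ≤ (1 - 2 * ε) * osc (k * m) := hcontr (k * m)
        _ ≤ (1 - 2 * ε) * ((1 - 2 * ε) ^ k * osc 0) :=
            mul_le_mul_of_nonneg_left ih hfac
        _ = (1 - 2 * ε) ^ (k + 1) * osc 0 := by ring
  have hosc_bdd : BddBelow (Set.range osc) := ⟨0, fun x ⟨n, hn⟩ => hn ▸ hosc_nonneg n⟩
  have hosc_lim : Tendsto osc atTop (𝓝 (⨅ n, osc n)) :=
    tendsto_atTop_ciInf hosc_anti hosc_bdd
  have hsub_lim : Tendsto (fun k => osc (k * m)) atTop (𝓝 (⨅ n, osc n)) := by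
    apply hosc_lim.comp
    apply StrictMono.tendsto_atTop
    intro a b hab
    exact (Nat.mul_lt_mul_right hm).mpr hab
  have hsub_zero : Tendsto (fun k => osc (k * m)) atTop (𝓝 0) := by
    apply tendsto_of_tendsto_of_tendsto_of_le_of_le (g := fun _ => (0:ℝ))
      (h := fun k => (1 - 2 * ε) ^ k * osc 0)
    · exact tendsto_const_nhds
    · have := (tendsto_pow_atTop_nhds_zero_of_lt_one hfac hfac1).mul_const (osc 0)
      simpa using this
    · exact fun k => hosc_nonneg (k * m)
    · exact fun k => hiter k
  have hinf0 : (⨅ n, osc n) = 0 := tendsto_nhds_unique hsub_lim hsub_zero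
  rw [hinf0] at hosc_lim
  have hMx_bdd : BddBelow (Set.range Mx) := by
    refine ⟨0, fun x ⟨n, hn⟩ => ?_⟩
    have h1 := (hmem n ⟨0, by omega⟩).2
    have h2 : 0 ≤ c n ⟨0, by omega⟩ := (rs_pow hP n).1 _ j
    linarith [hn ▸ (le_trans h2 h1)]
  set L := ⨅ n, Mx n with hL
  have hMx_lim : Tendsto Mx atTop (𝓝 L) := tendsto_atTop_ciInf hMx_anti hMx_bdd
  have hmn_lim : Tendsto mn atTop (𝓝 L) := by
    have h := hMx_lim.sub hosc_lim
    rw [sub_zero] at h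
    have e : mn = fun n => Mx n - osc n := by funext n; simp [hosc]
    rw [e]
    exact h
  refine ⟨L, fun i => ?_⟩
  exact tendsto_of_tendsto_of_tendsto_of_le_of_le hmn_lim hMx_lim
    (fun n => (hmem n i).1) (fun n => (hmem n i).2)

end PFAux

/-- Perron–Frobenius facts for an irreducible aperiodic stochastic matrix. -/
theorem perron_frobenius_stochastic (d : ℕ) (hd : 1 < d) (P : Matrix (Fin d) (Fin d) ℝ)
    (hP : RowStochastic P) (hprim : Primitive P) :
    (1 : ℂ) ∈ spectrumC P ∧
    (∀ z : ℂ, z ∈ spectrumC P → z ≠ 1 → ‖z‖ < 1) ∧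
    ∃ Pstar : Matrix (Fin d) (Fin d) ℝ, RowStochastic Pstar ∧
      ∀ i j, Tendsto (fun n : ℕ => (P ^ n) i j) atTop (𝓝 (Pstar i j)) := by
  obtain ⟨m, hm, hpos⟩ := hprim
  have hcol : ∀ j : Fin d, ∃ L : ℝ, ∀ i, Tendsto (fun n => (P ^ n) i j) atTop (𝓝 L) :=
    fun j => column_limit hd hP hm hpos j
  choose L hL using hcol
  set Pstar : Matrix (Fin d) (Fin d) ℝ := Matrix.of fun _ j => L j with hPsdef
  have hconv : ∀ i j, Tendsto (fun n : ℕ => (P ^ n) i j) atTop (𝓝 (Pstar i j)) :=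
    fun i j => hL j i
  have hPstar : RowStochastic Pstar := by
    constructor
    · intro i j
      exact ge_of_tendsto (hconv i j)
        (Filter.Eventually.of_forall fun n => (rs_pow hP n).1 i j)
    · intro i
      have h1 : Tendsto (fun n : ℕ => ∑ j, (P ^ n) i j) atTop (𝓝 (∑ j, Pstar i j)) :=
        tendsto_finset_sum _ (fun j _ => hconv i j)
      have h2 : (fun n : ℕ => ∑ j, (P ^ n) i j) = fun _ => (1 : ℝ) :=
        funext fun n => (rs_pow hP n).2 i
      rw [h2] at h1
      exact tendsto_nhds_unique h1 tendsto_const_nhds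
  refine ⟨?_, ?_, Pstar, hPstar, hconv⟩
  · -- 1 is an eigenvalue
    show ((P.map (Complex.ofReal : ℝ → ℂ)).charpoly).IsRoot 1
    rw [Polynomial.IsRoot, my_eval_charpoly]
    apply Matrix.exists_mulVec_eq_zero_iff.mp
    refine ⟨fun _ => 1, ?_, ?_⟩
    · intro h
      have := congrFun h ⟨0, by omega⟩
      simp at this
    · funext i
      simp only [Matrix.mulVec, dotProduct, Matrix.sub_apply, Matrix.smul_apply,
        Matrix.one_apply, Matrix.map_apply, mul_one, Pi.zero_apply, smul_eq_mul]
      rw [Finset.sum_sub_distrib]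
      rw [← Complex.ofReal_sum, hP.2 i]
      simp
  · -- all other eigenvalues have modulus < 1
    intro z hzspec hz1
    by_contra habs
    push_neg at habs
    set M := P.map (Complex.ofReal : ℝ → ℂ) with hMdef
    have hdet : ((z • (1 : Matrix (Fin d) (Fin d) ℂ)) - M).det = 0 := by
      have h := hzspec
      simp only [spectrumC, Set.mem_setOf_eq, Polynomial.IsRoot] at h
      rw [my_eval_charpoly] at h
      exact h
    obtain ⟨v, hv0, hv⟩ := Matrix.exists_mulVec_eq_zero_iff.mpr hdet
    have hMv : M.mulVec v = z • v := by
      rw [Matrix.sub_mulVec, Matrix.smul_mulVec, Matrix.one_mulVec, sub_eq_zero] at hv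
      exact hv.symm
    have hiter : ∀ n : ℕ, (M ^ n).mulVec v = z ^ n • v := by
      intro n
      induction n with
      | zero => simp [Matrix.one_mulVec]
      | succ n ih =>
        rw [pow_succ, ← Matrix.mulVec_mulVec, hMv, Matrix.mulVec_smul, ih, smul_smul,
          ← pow_succ']
    obtain ⟨i, hvi⟩ := Function.ne_iff.mp hv0
    have hmap : ∀ n : ℕ, M ^ n = (P ^ n).map (Complex.ofReal : ℝ → ℂ) := by
      intro n
      have : (Complex.ofRealHom.mapMatrix P) ^ n = Complex.ofRealHom.mapMatrix (P ^ n) :=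
        (map_pow Complex.ofRealHom.mapMatrix P n).symm
      exact this
    have htend : Tendsto (fun n : ℕ => ((M ^ n).mulVec v) i) atTop
        (𝓝 (((Pstar.map (Complex.ofReal : ℝ → ℂ)).mulVec v) i)) := by
      simp only [hmap, Matrix.mulVec, dotProduct, Matrix.map_apply]
      apply tendsto_finset_sum
      intro k _
      exact (((Complex.continuous_ofReal.tendsto _).comp (hconv i k)).mul_const (v k))
    set w := ((Pstar.map (Complex.ofReal : ℝ → ℂ)).mulVec v) i with hw
    have htend2 : Tendsto (fun n : ℕ => z ^ n * v i) atTop (𝓝 w) := by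
      have e : (fun n : ℕ => ((M ^ n).mulVec v) i) = fun n => z ^ n * v i := by
        funext n
        rw [hiter n]
        rfl
      rwa [e] at htend
    have hzn : Tendsto (fun n : ℕ => z ^ n) atTop (𝓝 (w / v i)) := by
      have h := htend2.div_const (v i)
      have e : (fun n : ℕ => z ^ n * v i / v i) = fun n => z ^ n := by
        funext n
        rw [mul_div_assoc, div_self hvi, mul_one]
      rwa [e] at h
    set cz := w / v i with hcz
    have h1 : Tendsto (fun n : ℕ => z ^ (n + 1)) atTop (𝓝 cz) :=
      (Filter.tendsto_add_atTop_iff_nat 1).mpr hzn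
    have h2 : Tendsto (fun n : ℕ => z * z ^ n) atTop (𝓝 (z * cz)) := hzn.const_mul z
    have e2 : (fun n : ℕ => z ^ (n + 1)) = fun n => z * z ^ n := by
      funext n
      rw [pow_succ']
    rw [e2] at h1
    have hzc : z * cz = cz := tendsto_nhds_unique h2 h1
    have hcz0 : cz = 0 := by
      have h3 : (z - 1) * cz = 0 := by rw [sub_mul, one_mul, hzc, sub_self]
      rcases mul_eq_zero.mp h3 with h | h
      · exact absurd (sub_eq_zero.mp h) hz1
      · exact h
    have habs1 : ∀ n : ℕ, (1 : ℝ) ≤ ‖z ^ n‖ := by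
      intro n
      rw [norm_pow]
      exact one_le_pow₀ habs
    have habst : Tendsto (fun n : ℕ => ‖z ^ n‖) atTop (𝓝 ‖cz‖) :=
      (continuous_norm.tendsto cz).comp hzn
    have hge : (1 : ℝ) ≤ ‖cz‖ := ge_of_tendsto habst
      (Filter.Eventually.of_forall habs1)
    rw [hcz0] at hge
    simp at hge
    linarith
end

section
/- Let d > 1 and let P be a random d×d row-stochastic matrix whose d rows are independent random vectors taking values in the standard simplex Δ_d, each row having a continuous distribution (i.e., assigning probability zero to every Lebesgue-nullset of Δ_d). Then with probability one, the characteristic polynomial of P has d distinct nonzero roots in ℂ. -/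
open Filter Topology MeasureTheory
open scoped Classical

namespace RMC

open Polynomial Matrix MeasureTheory
open scoped NNReal


variable {R : Type*} [CommRing R] {m : ℕ}

/-- columns indexed by `Fin (m+1) ⊕ Fin (m+2)` flattened via `finSumFinEquiv`;
row `r` records the `r`-th coefficient of `X^k * p` resp. `X^k * q`. -/
noncomputable def sylMatrix (m : ℕ) (p q : Polynomial R) :
    Matrix (Fin ((m+1)+(m+2))) (Fin ((m+1)+(m+2))) R :=
  Matrix.of fun r c =>
    (Sum.elim (fun k : Fin (m+1) => X ^ (k:ℕ) * p) (fun k : Fin (m+2) => X ^ (k:ℕ) * q)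
      (finSumFinEquiv.symm c)).coeff (r : ℕ)

noncomputable def Upoly (m : ℕ) (x : Fin ((m+1)+(m+2)) → R) : Polynomial R :=
  ∑ k : Fin (m+1), C (x (finSumFinEquiv (Sum.inl k))) * X ^ (k:ℕ)

noncomputable def Vpoly (m : ℕ) (x : Fin ((m+1)+(m+2)) → R) : Polynomial R :=
  ∑ k : Fin (m+2), C (x (finSumFinEquiv (Sum.inr k))) * X ^ (k:ℕ)

lemma coeff_finsum {N : ℕ} (f : Fin N → R) (j : Fin N) :
    (∑ k : Fin N, C (f k) * X ^ (k:ℕ)).coeff (j:ℕ) = f j := by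
  rw [Polynomial.finset_sum_coeff]
  rw [Finset.sum_eq_single j]
  · simp
  · intro k _ hk
    simp only [Polynomial.coeff_C_mul, Polynomial.coeff_X_pow]
    rw [if_neg, mul_zero]
    exact fun h => hk (Fin.ext h.symm)
  · simp

lemma sum_C_eq_self {N : ℕ} {p : Polynomial R} (h : p.natDegree < N) :
    ∑ k : Fin N, C (p.coeff (k:ℕ)) * X ^ (k:ℕ) = p := by
  conv_rhs => rw [p.as_sum_range' N h]
  rw [Fin.sum_univ_eq_sum_range fun i => C (p.coeff i) * X ^ i]
  simp [Polynomial.C_mul_X_pow_eq_monomial]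

lemma natDegree_Upoly (x : Fin ((m+1)+(m+2)) → R) : (Upoly m x).natDegree ≤ m := by
  refine Polynomial.natDegree_sum_le_of_forall_le _ _ fun k _ => ?_
  exact le_trans (Polynomial.natDegree_C_mul_X_pow_le _ _) (by omega)

lemma natDegree_Vpoly (x : Fin ((m+1)+(m+2)) → R) : (Vpoly m x).natDegree ≤ m + 1 := by
  refine Polynomial.natDegree_sum_le_of_forall_le _ _ fun k _ => ?_
  exact le_trans (Polynomial.natDegree_C_mul_X_pow_le _ _) (by omega)

lemma mulVec_sylMatrix (p q : Polynomial R) (x : Fin ((m+1)+(m+2)) → R)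
    (r : Fin ((m+1)+(m+2))) :
    (sylMatrix m p q).mulVec x r = (Upoly m x * p + Vpoly m x * q).coeff (r : ℕ) := by
  have : (sylMatrix m p q).mulVec x r
      = ∑ c, (Sum.elim (fun k : Fin (m+1) => X ^ (k:ℕ) * p)
          (fun k : Fin (m+2) => X ^ (k:ℕ) * q) (finSumFinEquiv.symm c)).coeff (r : ℕ) * x c := by
    simp [sylMatrix, Matrix.mulVec, dotProduct]
  rw [this, ← Equiv.sum_comp (finSumFinEquiv (m := m+1) (n := m+2))]
  simp only [Equiv.symm_apply_apply]
  rw [Fintype.sum_sum_type]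
  have hU : Upoly m x * p = ∑ k : Fin (m+1),
      C (x (finSumFinEquiv (Sum.inl k))) * X ^ (k:ℕ) * p := by
    rw [Upoly, Finset.sum_mul]
  have hV : Vpoly m x * q = ∑ k : Fin (m+2),
      C (x (finSumFinEquiv (Sum.inr k))) * X ^ (k:ℕ) * q := by
    rw [Vpoly, Finset.sum_mul]
  rw [Polynomial.coeff_add, hU, hV, Polynomial.finset_sum_coeff, Polynomial.finset_sum_coeff]
  congr 1 <;> refine Finset.sum_congr rfl fun k _ => ?_ <;>
    rw [mul_assoc, Polynomial.coeff_C_mul, mul_comm] <;> simp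

section Field

variable {K : Type*} [Field K]

lemma detSyl_eq_zero {p q : Polynomial K} (hp : p ≠ 0)
    (hdp : p.natDegree ≤ m + 2) (hdq : q.natDegree ≤ m + 1)
    {z : K} (hzp : p.IsRoot z) (hzq : q.IsRoot z) :
    (sylMatrix m p q).det = 0 := by
  obtain ⟨c, hc⟩ := (dvd_iff_isRoot.mpr hzp)
  obtain ⟨e, he⟩ := (dvd_iff_isRoot.mpr hzq)
  have hc0 : c ≠ 0 := by rintro rfl; simp at hc; exact hp hc
  have hXz : (X - C z) ≠ 0 := X_sub_C_ne_zero z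
  have hdc : c.natDegree ≤ m + 1 := by
    have := hc ▸ hdp
    rw [Polynomial.natDegree_mul hXz hc0, Polynomial.natDegree_X_sub_C] at this
    omega
  have hde : e.natDegree ≤ m := by
    rcases eq_or_ne e 0 with rfl | he0
    · simp
    · have := he ▸ hdq
      rw [Polynomial.natDegree_mul hXz he0, Polynomial.natDegree_X_sub_C] at this
      omega
  set x : Fin ((m+1)+(m+2)) → K := fun i =>
    Sum.elim (fun k : Fin (m+1) => e.coeff (k:ℕ)) (fun k : Fin (m+2) => (-c).coeff (k:ℕ))
      (finSumFinEquiv.symm i) with hx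
  have hUx : Upoly m x = e := by
    rw [Upoly]
    have : ∀ k : Fin (m+1), x (finSumFinEquiv (Sum.inl k)) = e.coeff (k:ℕ) := by
      intro k; rw [hx]; simp
    simp_rw [this]
    exact sum_C_eq_self (by omega)
  have hVx : Vpoly m x = -c := by
    rw [Vpoly]
    have : ∀ k : Fin (m+2), x (finSumFinEquiv (Sum.inr k)) = (-c).coeff (k:ℕ) := by
      intro k; rw [hx]; simp
    simp_rw [this]
    refine sum_C_eq_self ?_
    rw [Polynomial.natDegree_neg]; omega
  refine Matrix.exists_mulVec_eq_zero_iff.mp ⟨x, ?_, ?_⟩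
  · intro h0
    have hcoeff : x (finSumFinEquiv (Sum.inr ⟨c.natDegree, by omega⟩)) = 0 := by
      rw [h0]; rfl
    rw [hx] at hcoeff
    simp only [Equiv.symm_apply_apply, Sum.elim_inr, Polynomial.coeff_neg] at hcoeff
    exact hc0 (Polynomial.leadingCoeff_eq_zero.mp (by simpa using neg_eq_zero.mp hcoeff))
  · funext r
    rw [mulVec_sylMatrix, hUx, hVx, hc, he]
    have : e * ((X - C z) * c) + -c * ((X - C z) * e) = 0 := by ring
    rw [this]
    simp

lemma detSyl_ne_zero {p q : Polynomial K} (hmon : p.Monic)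
    (hdeg : p.natDegree = m + 2) (hdq : q.natDegree ≤ m + 1)
    (hco : IsCoprime p q) :
    (sylMatrix m p q).det ≠ 0 := by
  intro hdet
  obtain ⟨x, hx0, hxv⟩ := Matrix.exists_mulVec_eq_zero_iff.mpr hdet
  have hUV : Upoly m x * p + Vpoly m x * q = 0 := by
    ext j
    rcases lt_or_ge j ((m+1)+(m+2)) with hj | hj
    · have := congrFun hxv ⟨j, hj⟩
      rw [mulVec_sylMatrix] at this
      simpa using this
    · rw [Polynomial.coeff_zero]
      refine Polynomial.coeff_eq_zero_of_natDegree_lt (lt_of_le_of_lt ?_ (by omega : 2*m+2 < j))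
      refine le_trans (Polynomial.natDegree_add_le _ _) (max_le ?_ ?_)
      · refine le_trans (Polynomial.natDegree_mul_le) ?_
        have := natDegree_Upoly x
        omega
      · refine le_trans (Polynomial.natDegree_mul_le) ?_
        have := natDegree_Vpoly x
        omega
  have hpV : p ∣ Vpoly m x * q := ⟨-(Upoly m x), by linear_combination hUV⟩
  have hV0 : Vpoly m x = 0 := by
    refine Polynomial.eq_zero_of_dvd_of_natDegree_lt (hco.dvd_of_dvd_mul_right hpV) ?_
    have := natDegree_Vpoly x
    omega
  have hU0 : Upoly m x = 0 := by
    have h1 : Upoly m x * p = 0 := by rw [hV0] at hUV; simpa using hUV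
    rcases mul_eq_zero.mp h1 with h | h
    · exact h
    · exact absurd h hmon.ne_zero
  apply hx0
  funext i
  have hi : finSumFinEquiv (finSumFinEquiv.symm i) = i := Equiv.apply_symm_apply _ _
  rcases hsum : finSumFinEquiv.symm i with k | k
  · have : x (finSumFinEquiv (Sum.inl k)) = 0 := by
      rw [← coeff_finsum (fun k : Fin (m+1) => x (finSumFinEquiv (Sum.inl k))) k]
      rw [show (∑ j : Fin (m+1), C (x (finSumFinEquiv (Sum.inl j))) * X ^ (j:ℕ)) = Upoly m x from rfl, hU0]
      simp
    rw [← hi, hsum]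
    simpa using this
  · have : x (finSumFinEquiv (Sum.inr k)) = 0 := by
      rw [← coeff_finsum (fun k : Fin (m+2) => x (finSumFinEquiv (Sum.inr k))) k]
      rw [show (∑ j : Fin (m+2), C (x (finSumFinEquiv (Sum.inr j))) * X ^ (j:ℕ)) = Vpoly m x from rfl, hV0]
      simp
    rw [← hi, hsum]
    simpa using this

end Field

section Dmat

variable {S : Type*} [CommRing S]

noncomputable def Dmat (m : ℕ) (M : Matrix (Fin (m+2)) (Fin (m+2)) R) : R :=
  (sylMatrix m (Matrix.charpoly M) (derivative (Matrix.charpoly M))).det * M.det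

lemma sylMatrix_map (f : R →+* S) (p q : Polynomial R) :
    (sylMatrix m p q).map f = sylMatrix m (p.map f) (q.map f) := by
  ext r c
  rcases h : finSumFinEquiv.symm c with k | k
  · simp only [sylMatrix, Matrix.map_apply, Matrix.of_apply, h, Sum.elim_inl]
    rw [← Polynomial.coeff_map, Polynomial.map_mul, Polynomial.map_pow, Polynomial.map_X]
  · simp only [sylMatrix, Matrix.map_apply, Matrix.of_apply, h, Sum.elim_inr]
    rw [← Polynomial.coeff_map, Polynomial.map_mul, Polynomial.map_pow, Polynomial.map_X]

lemma Dmat_map (f : R →+* S) (M : Matrix (Fin (m+2)) (Fin (m+2)) R) :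
    Dmat m (M.map f) = f (Dmat m M) := by
  rw [Dmat, Dmat, _root_.map_mul, RingHom.map_det, RingHom.map_det, RingHom.mapMatrix_apply,
    RingHom.mapMatrix_apply, sylMatrix_map, ← Polynomial.derivative_map, ← Matrix.charpoly_map]

/-- the universal polynomial whose vanishing detects degenerate spectrum -/
noncomputable def univQ (m : ℕ) : MvPolynomial (Fin (m+2) × Fin (m+2)) ℝ :=
  Dmat m (Matrix.mvPolynomialX (Fin (m+2)) (Fin (m+2)) ℝ)

lemma Dmat_eq_eval (M : Matrix (Fin (m+2)) (Fin (m+2)) ℝ) :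
    Dmat m M = MvPolynomial.eval (fun v : Fin (m+2) × Fin (m+2) => M v.1 v.2) (univQ m) := by
  rw [univQ, ← Dmat_map ((MvPolynomial.eval
      (fun v : Fin (m+2) × Fin (m+2) => M v.1 v.2)))]
  congr 1
  ext i j
  simp [Matrix.mvPolynomialX]

end Dmat

section Witness

noncomputable def wA (m : ℕ) : Fin (m+2) → ℝ := fun i =>
  if i = Fin.last (m+1) then 1 else (1/2 : ℝ) ^ ((i:ℕ)+1)

lemma wA_injective (m : ℕ) : Function.Injective (wA m) := by
  have hlt : ∀ k : ℕ, ((1/2:ℝ)) ^ (k+1) < 1 := fun k =>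
    pow_lt_one₀ (by norm_num) (by norm_num) (by omega)
  have hmono : ∀ {a b : ℕ}, a < b → ((1/2:ℝ)) ^ b < (1/2:ℝ) ^ a := fun h =>
    pow_lt_pow_right_of_lt_one₀ (by norm_num) (by norm_num) h
  have hsa : Function.Injective fun k : ℕ => ((1/2:ℝ)) ^ k := by
    intro a b hab
    rcases lt_trichotomy a b with h | h | h
    · exact absurd hab.symm (ne_of_lt (hmono h))
    · exact h
    · exact absurd hab (ne_of_lt (hmono h))
  intro i j hij
  unfold wA at hij
  by_cases hi : i = Fin.last (m+1) <;> by_cases hj : j = Fin.last (m+1)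
  · rw [hi, hj]
  · rw [if_pos hi, if_neg hj] at hij; exact absurd hij.symm (ne_of_lt (hlt _))
  · rw [if_neg hi, if_pos hj] at hij; exact absurd hij (ne_of_lt (hlt _))
  · rw [if_neg hi, if_neg hj] at hij
    have := hsa hij
    exact Fin.ext (by omega)

lemma wA_ne_zero (m : ℕ) (i : Fin (m+2)) : wA m i ≠ 0 := by
  unfold wA
  split
  · norm_num
  · positivity

noncomputable def P0 (m : ℕ) : Matrix (Fin (m+2)) (Fin (m+2)) ℝ :=
  Matrix.of fun i j =>
    if j = i then wA m i else if j = Fin.last (m+1) then 1 - wA m i else 0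

lemma P0_triangular (m : ℕ) : (P0 m).BlockTriangular id := by
  intro i j hij
  have h1 : j ≠ i := ne_of_lt hij
  have h2 : j ≠ Fin.last (m+1) := by
    intro h
    exact absurd (h ▸ hij) (not_lt.mpr (Fin.le_last i))
  simp [P0, h1, h2]

lemma P0_diag (m : ℕ) (i : Fin (m+2)) : P0 m i i = wA m i := by simp [P0]

lemma P0_row_sum (m : ℕ) (i : Fin (m+2)) : ∑ j, P0 m i j = 1 := by
  have hz : ∀ j, j ≠ i → j ≠ Fin.last (m+1) → P0 m i j = 0 := by
    intro j h1 h2; simp [P0, h1, h2]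
  by_cases hi : i = Fin.last (m+1)
  · rw [Finset.sum_eq_single i]
    · subst hi; simp [P0, wA]
    · intro j _ hj
      exact hz j hj (by rwa [← hi])
    · simp
  · have hsub : ({i, Fin.last (m+1)} : Finset (Fin (m+2))) ⊆ Finset.univ :=
      Finset.subset_univ _
    rw [← Finset.sum_subset hsub (fun j _ hj => by
      simp only [Finset.mem_insert, Finset.mem_singleton, not_or] at hj
      exact hz j hj.1 hj.2)]
    rw [Finset.sum_pair hi]
    have h1 : P0 m i i = wA m i := P0_diag m i
    have h2 : P0 m i (Fin.last (m+1)) = 1 - wA m i := by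
      show (if Fin.last (m+1) = i then wA m i else if Fin.last (m+1) = Fin.last (m+1) then 1 - wA m i else 0) = 1 - wA m i
      rw [if_neg (fun h => hi h.symm), if_pos rfl]
    rw [h1, h2]; ring

lemma charpoly_P0 (m : ℕ) :
    Matrix.charpoly (P0 m) = ∏ i, (X - C (wA m i)) := by
  rw [Matrix.charpoly_of_upperTriangular _ (P0_triangular m)]
  simp [P0_diag]

lemma Dmat_P0_ne_zero (m : ℕ) : Dmat m (P0 m) ≠ 0 := by
  have hdeg : (Matrix.charpoly (P0 m)).natDegree = m + 2 := by
    rw [Matrix.charpoly_natDegree_eq_dim, Fintype.card_fin]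
  refine mul_ne_zero ?_ ?_
  · refine detSyl_ne_zero (Matrix.charpoly_monic _) hdeg ?_ ?_
    · have := Polynomial.natDegree_derivative_le (Matrix.charpoly (P0 m))
      omega
    · have hsep : (Matrix.charpoly (P0 m)).Separable := by
        rw [charpoly_P0]
        exact Polynomial.separable_prod_X_sub_C_iff.mpr (wA_injective m)
      exact hsep
  · rw [Matrix.det_of_upperTriangular (P0_triangular m)]
    exact Finset.prod_ne_zero_iff.mpr fun i _ => by rw [P0_diag]; exact wA_ne_zero m i

end Witness

section Complex

lemma conclusions (m : ℕ) (P : Matrix (Fin (m+2)) (Fin (m+2)) ℝ)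
    (hD : Dmat m P ≠ 0) :
    ((P.map (Complex.ofReal : ℝ → ℂ)).charpoly.roots.Nodup ∧
      Multiset.card ((P.map (Complex.ofReal : ℝ → ℂ)).charpoly.roots) = m + 2 ∧
      (0 : ℂ) ∉ (P.map (Complex.ofReal : ℝ → ℂ)).charpoly.roots) := by
  have hA : P.map (Complex.ofReal : ℝ → ℂ) = P.map (Complex.ofRealHom : ℝ →+* ℂ) := rfl
  rw [hA]
  have hchar : (P.map (Complex.ofRealHom : ℝ →+* ℂ)).charpoly
      = (Matrix.charpoly P).map Complex.ofRealHom := Matrix.charpoly_map P _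
  have hdegA : (P.map (Complex.ofRealHom : ℝ →+* ℂ)).charpoly.natDegree = m + 2 := by
    rw [Matrix.charpoly_natDegree_eq_dim, Fintype.card_fin]
  have hcard : Multiset.card (P.map (Complex.ofRealHom : ℝ →+* ℂ)).charpoly.roots = m + 2 := by
    have := Polynomial.splits_iff_card_roots.mp
      (IsAlgClosed.splits (P.map (Complex.ofRealHom : ℝ →+* ℂ)).charpoly)
    rw [hdegA] at this
    exact this
  have hdetP : P.det ≠ 0 := fun h => hD (by rw [Dmat, h, mul_zero])
  have hdetA : (P.map (Complex.ofRealHom : ℝ →+* ℂ)).det ≠ 0 := by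
    have : (P.map (Complex.ofRealHom : ℝ →+* ℂ)).det = Complex.ofRealHom P.det := by
      rw [RingHom.map_det, RingHom.mapMatrix_apply]
    rw [this]
    simpa using hdetP
  refine ⟨?_, hcard, ?_⟩
  · by_contra hnd
    obtain ⟨z, hz⟩ : ∃ z, 2 ≤ Multiset.count z (P.map (Complex.ofRealHom : ℝ →+* ℂ)).charpoly.roots := by
      by_contra h
      push_neg at h
      exact hnd (Multiset.nodup_iff_count_le_one.mpr fun a => by have := h a; omega)
    rw [Polynomial.count_roots] at hz
    have hdvd : (X - C z) ^ 2 ∣ (P.map (Complex.ofRealHom : ℝ →+* ℂ)).charpoly :=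
      dvd_trans (pow_dvd_pow _ hz) (Polynomial.pow_rootMultiplicity_dvd _ z)
    obtain ⟨c, hc⟩ := hdvd
    have hzp : (P.map (Complex.ofRealHom : ℝ →+* ℂ)).charpoly.IsRoot z := by
      rw [Polynomial.IsRoot, hc]; simp
    have hzq : (derivative (P.map (Complex.ofRealHom : ℝ →+* ℂ)).charpoly).IsRoot z := by
      rw [Polynomial.IsRoot, hc]
      simp [Polynomial.derivative_mul, Polynomial.derivative_pow]
    have hdet0 : (sylMatrix m (P.map (Complex.ofRealHom : ℝ →+* ℂ)).charpoly
        (derivative (P.map (Complex.ofRealHom : ℝ →+* ℂ)).charpoly)).det = 0 := by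
      refine detSyl_eq_zero (Matrix.charpoly_monic _).ne_zero (le_of_eq hdegA) ?_ hzp hzq
      have := Polynomial.natDegree_derivative_le (P.map (Complex.ofRealHom : ℝ →+* ℂ)).charpoly
      omega
    apply hD
    have hmapsyl : (sylMatrix m (Matrix.charpoly P) (derivative (Matrix.charpoly P))).map
        Complex.ofRealHom = sylMatrix m (P.map (Complex.ofRealHom : ℝ →+* ℂ)).charpoly
          (derivative (P.map (Complex.ofRealHom : ℝ →+* ℂ)).charpoly) := by
      rw [sylMatrix_map, hchar, Polynomial.derivative_map]
    have hz0 : Complex.ofRealHom ((sylMatrix m (Matrix.charpoly P)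
        (derivative (Matrix.charpoly P))).det) = 0 := by
      rw [RingHom.map_det, RingHom.mapMatrix_apply, hmapsyl, hdet0]
    have hsylP : (sylMatrix m (Matrix.charpoly P)
        (derivative (Matrix.charpoly P))).det = 0 := Complex.ofReal_eq_zero.mp hz0
    rw [Dmat, hsylP, zero_mul]
  · intro h0
    apply hdetA
    rw [Matrix.det_eq_prod_roots_charpoly]
    exact Multiset.prod_eq_zero h0

end Complex



/-! ### Measurability of multivariate polynomial evaluation -/

lemma measurable_mvEval {ι : Type*} [Fintype ι] (Q : MvPolynomial ι ℝ) :
    Measurable fun x : ι → ℝ => MvPolynomial.eval x Q := by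
  induction Q using MvPolynomial.induction_on with
  | C a => simpa using measurable_const
  | add p q hp hq =>
      simp only [_root_.map_add]
      exact hp.add hq
  | mul_X p i hp =>
      simp only [_root_.map_mul, MvPolynomial.eval_X]
      exact hp.mul (measurable_pi_apply i)

lemma eval_aeval {σ τ : Type*} (g : σ → MvPolynomial τ ℝ) (z : τ → ℝ) (p : MvPolynomial σ ℝ) :
    MvPolynomial.eval z (MvPolynomial.aeval g p)
      = MvPolynomial.eval (fun i => MvPolynomial.eval z (g i)) p := by
  induction p using MvPolynomial.induction_on with
  | C a => simp
  | add p q hp hq => rw [_root_.map_add, _root_.map_add, hp, hq, _root_.map_add]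
  | mul_X p i hp =>
      rw [_root_.map_mul, MvPolynomial.aeval_X, _root_.map_mul, hp, _root_.map_mul,
        MvPolynomial.eval_X]

/-! ### The zero set of a nonzero multivariate polynomial is Lebesgue-null -/

lemma mvpoly_null_fin : ∀ (n : ℕ) (Q : MvPolynomial (Fin n) ℝ), Q ≠ 0 →
    (Measure.pi fun _ : Fin n => (volume : Measure ℝ))
      {x | MvPolynomial.eval x Q = 0} = 0 := by
  intro n
  induction n with
  | zero =>
    intro Q hQ
    obtain ⟨c, rfl⟩ := MvPolynomial.C_surjective (Fin 0) Q
    have hc : c ≠ 0 := fun h => hQ (by rw [h, map_zero])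
    have : {x : Fin 0 → ℝ | MvPolynomial.eval x (MvPolynomial.C c) = 0} = ∅ := by
      ext x; simp [hc]
    rw [this]; simp
  | succ n IH =>
    intro Q hQ
    set q := MvPolynomial.finSuccEquiv ℝ n Q with hqdef
    have hq0 : q ≠ 0 := by
      intro h
      apply hQ
      have := (MvPolynomial.finSuccEquiv ℝ n).injective (a₁ := Q) (a₂ := 0) (by simpa [hqdef] using h)
      exact this
    set L := q.leadingCoeff with hLdef
    have hL0 : L ≠ 0 := Polynomial.leadingCoeff_ne_zero.mpr hq0
    have hW := IH L hL0
    -- measurable pieces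
    have hcons : Measurable fun sa : (Fin n → ℝ) × ℝ => (Fin.cons sa.2 sa.1 : Fin (n+1) → ℝ) := by
      refine measurable_pi_lambda _ fun i => ?_
      refine Fin.cases ?_ ?_ i
      · simpa using measurable_snd
      · intro j; simpa using (measurable_fst.eval : Measurable fun c : (Fin n → ℝ) × ℝ => c.1 j)
    have hE'meas : MeasurableSet {sa : (Fin n → ℝ) × ℝ |
        MvPolynomial.eval (Fin.cons sa.2 sa.1) Q = 0} :=
      ((measurable_mvEval Q).comp hcons) (measurableSet_singleton 0)
    have hZmeas : MeasurableSet {x : Fin (n+1) → ℝ | MvPolynomial.eval x Q = 0} :=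
      (measurable_mvEval Q) (measurableSet_singleton 0)
    -- the map (a, s) ↦ cons a s is measure preserving onto pi
    have hg : Measurable fun p : ℝ × (Fin n → ℝ) => (Fin.cons p.1 p.2 : Fin (n+1) → ℝ) := by
      refine measurable_pi_lambda _ fun i => ?_
      refine Fin.cases ?_ ?_ i
      · simpa using measurable_fst
      · intro j; simpa using (measurable_snd.eval : Measurable fun c : ℝ × (Fin n → ℝ) => c.2 j)
    have hmapg : Measure.map (fun p : ℝ × (Fin n → ℝ) => (Fin.cons p.1 p.2 : Fin (n+1) → ℝ))
        ((volume : Measure ℝ).prod (Measure.pi fun _ : Fin n => volume))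
        = Measure.pi (fun _ : Fin (n+1) => (volume : Measure ℝ)) := by
      refine (Measure.pi_eq fun s hs => ?_).symm
      rw [Measure.map_apply hg (MeasurableSet.univ_pi hs)]
      have hpre : (fun p : ℝ × (Fin n → ℝ) => (Fin.cons p.1 p.2 : Fin (n+1) → ℝ)) ⁻¹'
          (Set.univ.pi s) = (s 0) ×ˢ (Set.univ.pi fun i => s i.succ) := by
        ext p
        simp only [Set.mem_preimage, Set.mem_pi, Set.mem_univ, forall_true_left, Set.mem_prod,
          Fin.forall_fin_succ, Fin.cons_zero, Fin.cons_succ]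
      rw [hpre, Measure.prod_prod, Measure.pi_pi, Fin.prod_univ_succ]
    -- compute
    have step1 : (Measure.pi fun _ : Fin (n+1) => (volume : Measure ℝ))
        {x | MvPolynomial.eval x Q = 0}
        = ((volume : Measure ℝ).prod (Measure.pi fun _ : Fin n => volume))
          {p : ℝ × (Fin n → ℝ) | MvPolynomial.eval (Fin.cons p.1 p.2) Q = 0} := by
      rw [← hmapg, Measure.map_apply hg hZmeas]
      rfl
    have step2 : ((volume : Measure ℝ).prod (Measure.pi fun _ : Fin n => volume))
          {p : ℝ × (Fin n → ℝ) | MvPolynomial.eval (Fin.cons p.1 p.2) Q = 0}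
        = ((Measure.pi fun _ : Fin n => (volume : Measure ℝ)).prod (volume : Measure ℝ))
          {sa : (Fin n → ℝ) × ℝ | MvPolynomial.eval (Fin.cons sa.2 sa.1) Q = 0} := by
      rw [← Measure.prod_swap]
      rw [Measure.map_apply measurable_swap]
      · rfl
      · exact ((measurable_mvEval Q).comp hg) (measurableSet_singleton 0)
    rw [step1, step2, Measure.measure_prod_null hE'meas]
    have hae : ∀ᵐ s ∂(Measure.pi fun _ : Fin n => (volume : Measure ℝ)),
        MvPolynomial.eval s L ≠ 0 := by
      have h' := MeasureTheory.measure_eq_zero_iff_ae_notMem.mp hW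
      filter_upwards [h'] with s hs
      simpa using hs
    filter_upwards [hae] with s hs
    have hps : (Polynomial.map (MvPolynomial.eval s) q) ≠ 0 := by
      intro h
      apply hs
      have : (Polynomial.map (MvPolynomial.eval s) q).coeff q.natDegree
          = MvPolynomial.eval s L := by
        rw [Polynomial.coeff_map, hLdef, Polynomial.leadingCoeff]
      rw [h] at this
      simpa using this.symm
    have hslice : (Prod.mk s ⁻¹' {sa : (Fin n → ℝ) × ℝ |
        MvPolynomial.eval (Fin.cons sa.2 sa.1) Q = 0})
        ⊆ {a : ℝ | (Polynomial.map (MvPolynomial.eval s) q).IsRoot a} := by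
      intro a ha
      simp only [Set.mem_preimage, Set.mem_setOf_eq] at ha ⊢
      rw [Polynomial.IsRoot, ← MvPolynomial.eval_eq_eval_mv_eval']
      exact ha
    exact measure_mono_null hslice ((Polynomial.finite_setOf_isRoot hps).measure_zero _)

lemma mvpoly_null {ι : Type*} [Fintype ι] (Q : MvPolynomial ι ℝ) (hQ : Q ≠ 0) :
    (Measure.pi fun _ : ι => (volume : Measure ℝ)) {x | MvPolynomial.eval x Q = 0} = 0 := by
  classical
  have e : Fin (Fintype.card ι) ≃ ι := (Fintype.equivFin ι).symm
  have mp := MeasureTheory.measurePreserving_piCongrLeft (fun _ : ι => (volume : Measure ℝ)) e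
  have hZ : MeasurableSet {x : ι → ℝ | MvPolynomial.eval x Q = 0} :=
    (measurable_mvEval Q) (measurableSet_singleton 0)
  rw [← mp.measure_preimage hZ.nullMeasurableSet]
  have hpre : (⇑(MeasurableEquiv.piCongrLeft (fun _ : ι => ℝ) e)) ⁻¹'
      {x : ι → ℝ | MvPolynomial.eval x Q = 0}
      = {y : Fin (Fintype.card ι) → ℝ |
          MvPolynomial.eval y (MvPolynomial.rename e.symm Q) = 0} := by
    ext y
    simp only [Set.mem_preimage, Set.mem_setOf_eq, MvPolynomial.eval_rename]
    have hy : (fun i => (MeasurableEquiv.piCongrLeft (fun _ : ι => ℝ) e) y i) = y ∘ e.symm := by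
      funext i
      rw [MeasurableEquiv.coe_piCongrLeft]
      conv_lhs => rw [show i = e (e.symm i) from (Equiv.apply_symm_apply e i).symm]
      rw [Equiv.piCongrLeft_apply_apply]
      rfl
    rw [show (MeasurableEquiv.piCongrLeft (fun _ : ι => ℝ) e) y
        = fun i => (MeasurableEquiv.piCongrLeft (fun _ : ι => ℝ) e) y i from rfl, hy]
  rw [hpre]
  refine mvpoly_null_fin _ _ ?_
  intro h
  exact hQ (MvPolynomial.rename_injective _ e.symm.injective (by rw [h, map_zero]))

/-! ### Absolute continuity of product measures -/

lemma absolutelyContinuous_pi {β : Type*} [MeasurableSpace β] :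
    ∀ {n : ℕ} (ν κ : Fin n → Measure β), (∀ i, SigmaFinite (ν i)) →
      (∀ i, SigmaFinite (κ i)) → (∀ i, ν i ≪ κ i) → Measure.pi ν ≪ Measure.pi κ := by
  intro n
  induction n with
  | zero =>
    intro ν κ _ _ _
    refine Measure.AbsolutelyContinuous.mk fun s hs h0 => ?_
    rcases Set.eq_empty_or_nonempty s with rfl | ⟨x, hx⟩
    · simp
    · exfalso
      have hsu : s = Set.univ := Set.eq_univ_of_forall fun y => (Subsingleton.elim x y) ▸ hx
      rw [hsu, Measure.pi_univ] at h0
      simp at h0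
  | succ n IH =>
    intro ν κ hsν hsκ h
    haveI := hsν; haveI := hsκ
    have mpν := MeasureTheory.measurePreserving_piFinSuccAbove ν 0
    have mpκ := MeasureTheory.measurePreserving_piFinSuccAbove κ 0
    have hν : Measure.map (⇑(MeasurableEquiv.piFinSuccAbove (fun _ : Fin (n+1) => β) 0).symm)
        ((ν 0).prod (Measure.pi fun i => ν ((0 : Fin (n+1)).succAbove i))) = Measure.pi ν := by
      rw [← mpν.map_eq, MeasurableEquiv.map_symm_map]
    have hκ : Measure.map (⇑(MeasurableEquiv.piFinSuccAbove (fun _ : Fin (n+1) => β) 0).symm)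
        ((κ 0).prod (Measure.pi fun i => κ ((0 : Fin (n+1)).succAbove i))) = Measure.pi κ := by
      rw [← mpκ.map_eq, MeasurableEquiv.map_symm_map]
    rw [← hν, ← hκ]
    haveI : ∀ i, SigmaFinite ((fun i => ν ((0 : Fin (n+1)).succAbove i)) i) := fun i => hsν _
    haveI : ∀ i, SigmaFinite ((fun i => κ ((0 : Fin (n+1)).succAbove i)) i) := fun i => hsκ _
    have hprod : ((ν 0).prod (Measure.pi fun i => ν ((0 : Fin (n+1)).succAbove i)))
        ≪ ((κ 0).prod (Measure.pi fun i => κ ((0 : Fin (n+1)).succAbove i))) :=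
      Measure.AbsolutelyContinuous.prod (h 0)
        (IH _ _ (fun i => hsν _) (fun i => hsκ _) (fun i => h _))
    exact hprod.map (MeasurableEquiv.piFinSuccAbove (fun _ : Fin (n+1) => β) 0).symm.measurable



noncomputable def Tmap (m : ℕ) (y : Fin (m+1) → ℝ) : Fin (m+2) → ℝ := fun j =>
  if h : (j : ℕ) < m + 1 then y ⟨j, h⟩ else 1 - ∑ k, y k

lemma Tmap_lipschitz (m : ℕ) : LipschitzWith ((m : ℝ≥0) + 1) (Tmap m) := by
  refine LipschitzWith.of_dist_le_mul fun y y' => ?_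
  have hK : (((m : ℝ≥0) + 1 : ℝ≥0) : ℝ) = (m : ℝ) + 1 := by push_cast; ring
  rw [hK]
  refine dist_pi_le_iff (by positivity) |>.mpr fun j => ?_
  unfold Tmap
  split
  · refine le_trans (dist_le_pi_dist y y' _) ?_
    nlinarith [dist_nonneg (x := y) (y := y')]
  · rw [Real.dist_eq]
    have h1 : (1 - ∑ k, y k) - (1 - ∑ k, y' k) = ∑ k, (y' k - y k) := by
      rw [Finset.sum_sub_distrib]; ring
    rw [h1]
    refine le_trans (Finset.abs_sum_le_sum_abs _ _) ?_
    have h2 : ∀ k : Fin (m+1), |y' k - y k| ≤ dist y y' := fun k => by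
      rw [← Real.dist_eq, dist_comm]
      exact dist_le_pi_dist y y' k
    calc ∑ k, |y' k - y k| ≤ ∑ _k : Fin (m+1), dist y y' := Finset.sum_le_sum fun k _ => h2 k
    _ ≤ ((m : ℝ) + 1) * dist y y' := by
        rw [Finset.sum_const, Finset.card_univ, Fintype.card_fin]
        have : ((m+1 : ℕ) : ℝ) = (m : ℝ) + 1 := by push_cast; ring
        rw [nsmul_eq_mul, this]

lemma Tmap_antilipschitz (m : ℕ) : AntilipschitzWith 1 (Tmap m) := by
  refine AntilipschitzWith.of_le_mul_dist fun y y' => ?_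
  rw [NNReal.coe_one, one_mul]
  refine dist_pi_le_iff dist_nonneg |>.mpr fun k => ?_
  have h : ∀ z : Fin (m+1) → ℝ,
      Tmap m z ⟨(k : ℕ), Nat.lt_succ_of_lt k.isLt⟩ = z k := by
    intro z
    unfold Tmap
    rw [dif_pos (show ((⟨(k : ℕ), Nat.lt_succ_of_lt k.isLt⟩ : Fin (m+2)) : ℕ) < m + 1 from k.isLt)]
  calc dist (y k) (y' k)
      = dist (Tmap m y ⟨(k : ℕ), Nat.lt_succ_of_lt k.isLt⟩)
          (Tmap m y' ⟨(k : ℕ), Nat.lt_succ_of_lt k.isLt⟩) := by rw [h, h]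
    _ ≤ dist (Tmap m y) (Tmap m y') := dist_le_pi_dist _ _ _

lemma Tmap_measurable (m : ℕ) : Measurable (Tmap m) :=
  (Tmap_lipschitz m).continuous.measurable

lemma Tmap_sigmaFinite (m : ℕ) :
    SigmaFinite ((volume : Measure (Fin (m+1) → ℝ)).map (Tmap m)) := by
  have hclosed : Topology.IsClosedEmbedding (Tmap m) :=
    (Tmap_antilipschitz m).isClosedEmbedding (Tmap_lipschitz m).uniformContinuous
  have hemb : MeasurableEmbedding (Tmap m) :=
    hclosed.toIsEmbedding.measurableEmbedding hclosed.isClosed_range.measurableSet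
  exact hemb.sigmaFinite_map

lemma Tmap_eq_of_sum_one {m : ℕ} {x : Fin (m+2) → ℝ} (hx : ∑ j, x j = 1) :
    Tmap m (fun k : Fin (m+1) => x ⟨(k : ℕ), Nat.lt_succ_of_lt k.isLt⟩) = x := by
  funext j
  unfold Tmap
  split
  · next h => congr 1
  · next h =>
    have hj : j = Fin.last (m+1) := by
      have := j.isLt
      refine Fin.ext ?_
      simp only [Fin.val_last]
      omega
    have hsplit : ∑ j', x j'
        = (∑ k : Fin (m+1), x ⟨(k : ℕ), Nat.lt_succ_of_lt k.isLt⟩) + x (Fin.last (m+1)) := by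
      rw [Fin.sum_univ_castSucc]
      congr 1
    rw [hj]
    rw [hsplit] at hx
    linarith

lemma hausdorff_restrict_ac (m : ℕ) :
    ((μH[((m+2 : ℕ) : ℝ) - 1] : Measure (Fin (m+2) → ℝ)).restrict (stdSimplex ℝ (Fin (m+2))))
      ≪ (volume : Measure (Fin (m+1) → ℝ)).map (Tmap m) := by
  have hexp : ((m+2 : ℕ) : ℝ) - 1 = ((m+1 : ℕ) : ℝ) := by push_cast; ring
  have hvol : (μH[((m+2 : ℕ) : ℝ) - 1] : Measure (Fin (m+1) → ℝ)) = volume := by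
    have h := MeasureTheory.hausdorffMeasure_pi_real (ι := Fin (m+1))
    rw [Fintype.card_fin] at h
    rw [hexp]
    exact h
  refine Measure.AbsolutelyContinuous.mk fun s hs h0 => ?_
  rw [Measure.map_apply (Tmap_measurable m) hs] at h0
  rw [Measure.restrict_apply hs]
  have hsub : s ∩ stdSimplex ℝ (Fin (m+2)) ⊆ Tmap m '' (Tmap m ⁻¹' s) := by
    rintro x ⟨hxs, hxΔ⟩
    have hTx : Tmap m (fun k : Fin (m+1) => x ⟨(k : ℕ), Nat.lt_succ_of_lt k.isLt⟩) = x :=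
      Tmap_eq_of_sum_one hxΔ.2
    exact ⟨_, by rw [Set.mem_preimage, hTx]; exact hxs, hTx⟩
  refine le_antisymm (le_trans (measure_mono hsub) ?_) zero_le
  refine le_trans ((Tmap_lipschitz m).hausdorffMeasure_image_le
    (by rw [hexp]; positivity) _) ?_
  rw [hvol, h0, mul_zero]


section Assembly

open ProbabilityTheory

noncomputable def subst (m : ℕ) : Fin (m+2) × Fin (m+2) → MvPolynomial (Fin (m+2) × Fin (m+1)) ℝ :=
  fun v => if h : (v.2 : ℕ) < m + 1 then MvPolynomial.X (v.1, ⟨v.2, h⟩)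
    else MvPolynomial.C 1 - ∑ k : Fin (m+1), MvPolynomial.X (v.1, k)

noncomputable def subQ (m : ℕ) : MvPolynomial (Fin (m+2) × Fin (m+1)) ℝ :=
  MvPolynomial.aeval (subst m) (univQ m)

lemma eval_subst (m : ℕ) (z : Fin (m+2) × Fin (m+1) → ℝ) (v : Fin (m+2) × Fin (m+2)) :
    MvPolynomial.eval z (subst m v) = Tmap m (fun k => z (v.1, k)) v.2 := by
  unfold subst Tmap
  by_cases h : (v.2 : ℕ) < m + 1
  · rw [dif_pos h, dif_pos h, MvPolynomial.eval_X]
  · rw [dif_neg h, dif_neg h]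
    simp

lemma Dmat_Smap (m : ℕ) (y : Fin (m+2) → Fin (m+1) → ℝ) :
    Dmat m (Matrix.of fun i j => Tmap m (y i) j)
      = MvPolynomial.eval (fun v : Fin (m+2) × Fin (m+1) => y v.1 v.2) (subQ m) := by
  have hf : (fun v : Fin (m+2) × Fin (m+2) => (Matrix.of fun i j => Tmap m (y i) j) v.1 v.2)
      = fun v => MvPolynomial.eval (fun v' : Fin (m+2) × Fin (m+1) => y v'.1 v'.2) (subst m v) := by
    funext v
    rw [eval_subst]
    rfl
  rw [subQ, eval_aeval, Dmat_eq_eval, hf]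

lemma subQ_ne_zero (m : ℕ) : subQ m ≠ 0 := by
  intro h
  apply Dmat_P0_ne_zero m
  have h2 : ∀ i, Tmap m (fun k : Fin (m+1) =>
      P0 m i ⟨(k : ℕ), Nat.lt_succ_of_lt k.isLt⟩) = P0 m i :=
    fun i => Tmap_eq_of_sum_one (P0_row_sum m i)
  have h3 := Dmat_Smap m (fun i (k : Fin (m+1)) => P0 m i ⟨(k : ℕ), Nat.lt_succ_of_lt k.isLt⟩)
  rw [h] at h3
  simp only [map_zero] at h3
  rw [← h3]
  congr 1
  ext i j
  rw [Matrix.of_apply]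
  rw [h2 i]

lemma map_uncurry_pi (a b : ℕ) :
    Measure.map (fun (y : Fin a → Fin b → ℝ) (p : Fin a × Fin b) => y p.1 p.2)
      (Measure.pi fun _ : Fin a => (volume : Measure (Fin b → ℝ)))
      = Measure.pi (fun _ : Fin a × Fin b => (volume : Measure ℝ)) := by
  have hmeas : Measurable fun (y : Fin a → Fin b → ℝ) (p : Fin a × Fin b) => y p.1 p.2 :=
    measurable_pi_lambda _ fun p => (measurable_pi_apply p.2).comp (measurable_pi_apply p.1)
  refine (Measure.pi_eq fun s hs => ?_).symm
  rw [Measure.map_apply hmeas (MeasurableSet.univ_pi hs)]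
  have hpre : (fun (y : Fin a → Fin b → ℝ) (p : Fin a × Fin b) => y p.1 p.2) ⁻¹' (Set.univ.pi s)
      = Set.univ.pi fun i : Fin a => Set.univ.pi fun j : Fin b => s (i, j) := by
    ext y
    simp only [Set.mem_preimage, Set.mem_pi, Set.mem_univ, forall_true_left, Prod.forall]
  rw [hpre, Measure.pi_pi, Fintype.prod_prod_type]
  exact Finset.prod_congr rfl fun i _ => MeasureTheory.volume_pi_pi _

lemma law_eq_pi {Ω : Type*} [MeasurableSpace Ω] (μ : Measure Ω) [IsProbabilityMeasure μ]
    {d : ℕ} {β : Type*} [MeasurableSpace β] (f : Fin d → Ω → β)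
    (hmeas : ∀ i, Measurable (f i))
    (hindep : ProbabilityTheory.iIndepFun f μ) :
    Measure.map (fun ω (i : Fin d) => f i ω) μ
      = Measure.pi (fun i => Measure.map (f i) μ) := by
  haveI : ∀ i, IsProbabilityMeasure (Measure.map (f i) μ) :=
    fun i => Measure.isProbabilityMeasure_map (hmeas i).aemeasurable
  have hF : Measurable fun ω (i : Fin d) => f i ω := measurable_pi_lambda _ hmeas
  refine (Measure.pi_eq fun s hs => ?_).symm
  rw [Measure.map_apply hF (MeasurableSet.univ_pi hs)]
  have hpre : (fun ω (i : Fin d) => f i ω) ⁻¹' Set.univ.pi s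
      = ⋂ i ∈ Finset.univ, (f i) ⁻¹' s i := by
    ext ω; simp [Set.mem_pi]
  rw [hpre, (ProbabilityTheory.iIndepFun_iff_measure_inter_preimage_eq_mul.mp hindep)
    Finset.univ (fun i _ => hs i)]
  exact Finset.prod_congr rfl fun i _ => (Measure.map_apply (hmeas i) (hs i)).symm

end Assembly

end RMC

/-- a random stochastic matrix with independent rows having continuous
distributions on the simplex almost surely has `d` distinct nonzero eigenvalues. -/
theorem random_markov_chain_simple_spectrum {Ω : Type*} [MeasurableSpace Ω]
    (μ : MeasureTheory.Measure Ω) [MeasureTheory.IsProbabilityMeasure μ]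
    (d : ℕ) (hd : 1 < d) (X : Ω → Matrix (Fin d) (Fin d) ℝ)
    (hmeas : ∀ i, Measurable fun ω => X ω i)
    (hindep : ProbabilityTheory.iIndepFun
      (fun i ω => X ω i) μ)
    (hsimplex : ∀ ω i, X ω i ∈ stdSimplex ℝ (Fin d))
    (hcont : ∀ i, MeasureTheory.Measure.map (fun ω => X ω i) μ ≪
      (μH[((d : ℝ) - 1)]).restrict (stdSimplex ℝ (Fin d))) :
    ∀ᵐ ω ∂μ,
      (((X ω).map (Complex.ofReal : ℝ → ℂ)).charpoly.roots.Nodup ∧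
        Multiset.card (((X ω).map (Complex.ofReal : ℝ → ℂ)).charpoly.roots) = d ∧
        (0 : ℂ) ∉ ((X ω).map (Complex.ofReal : ℝ → ℂ)).charpoly.roots) := by
  obtain ⟨m, rfl⟩ : ∃ m, d = m + 2 := ⟨d - 2, by omega⟩
  classical
  set Y : Ω → (Fin (m+2) → Fin (m+2) → ℝ) := fun ω i => X ω i with hYdef
  have hYmeas : Measurable Y := measurable_pi_lambda _ hmeas
  haveI hprob : ∀ i : Fin (m+2), IsProbabilityMeasure (Measure.map (fun ω => X ω i) μ) :=
    fun i => MeasureTheory.Measure.isProbabilityMeasure_map (hmeas i).aemeasurable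
  haveI hsf := RMC.Tmap_sigmaFinite m
  set B : Set (Fin (m+2) → Fin (m+2) → ℝ) := {M | RMC.Dmat m (Matrix.of M) = 0} with hBdef
  have hDeval : (fun M : Fin (m+2) → Fin (m+2) → ℝ => RMC.Dmat m (Matrix.of M))
      = fun M => MvPolynomial.eval (fun v : Fin (m+2) × Fin (m+2) => M v.1 v.2) (RMC.univQ m) := by
    funext M
    rw [RMC.Dmat_eq_eval]
    rfl
  have hBmeas : MeasurableSet B := by
    have hm : Measurable fun M : Fin (m+2) → Fin (m+2) → ℝ => RMC.Dmat m (Matrix.of M) := by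
      rw [hDeval]
      exact (RMC.measurable_mvEval (RMC.univQ m)).comp
        (measurable_pi_lambda _ fun v =>
          (measurable_pi_apply v.2).comp (measurable_pi_apply v.1))
    exact hm (measurableSet_singleton 0)
  have hlaw := RMC.law_eq_pi μ (fun (i : Fin (m+2)) ω => X ω i) hmeas hindep
  have hAC : Measure.map Y μ ≪ Measure.pi fun _ : Fin (m+2) =>
      (volume : Measure (Fin (m+1) → ℝ)).map (RMC.Tmap m) := by
    rw [hYdef, hlaw]
    refine RMC.absolutelyContinuous_pi _ _ (fun i => inferInstance)
      (fun i => RMC.Tmap_sigmaFinite m) fun i => ?_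
    exact (hcont i).trans (RMC.hausdorff_restrict_ac m)
  have hZ'meas : MeasurableSet {z : Fin (m+2) × Fin (m+1) → ℝ |
      MvPolynomial.eval z (RMC.subQ m) = 0} :=
    (RMC.measurable_mvEval (RMC.subQ m)) (measurableSet_singleton 0)
  have hpiκ : (Measure.pi fun _ : Fin (m+2) =>
      (volume : Measure (Fin (m+1) → ℝ)).map (RMC.Tmap m)) B = 0 := by
    have mp : MeasurePreserving
        (fun (y : Fin (m+2) → Fin (m+1) → ℝ) (i : Fin (m+2)) => RMC.Tmap m (y i))
        (Measure.pi fun _ : Fin (m+2) => (volume : Measure (Fin (m+1) → ℝ)))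
        (Measure.pi fun _ : Fin (m+2) =>
          (volume : Measure (Fin (m+1) → ℝ)).map (RMC.Tmap m)) :=
      MeasureTheory.measurePreserving_pi _ _ (fun i => ⟨RMC.Tmap_measurable m, rfl⟩)
    rw [← mp.map_eq, Measure.map_apply mp.measurable hBmeas]
    have hpre : (fun (y : Fin (m+2) → Fin (m+1) → ℝ) (i : Fin (m+2)) => RMC.Tmap m (y i)) ⁻¹' B
        = (fun (y : Fin (m+2) → Fin (m+1) → ℝ) (p : Fin (m+2) × Fin (m+1)) => y p.1 p.2) ⁻¹'
          {z : Fin (m+2) × Fin (m+1) → ℝ | MvPolynomial.eval z (RMC.subQ m) = 0} := by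
      ext y
      simp only [Set.mem_preimage, hBdef, Set.mem_setOf_eq]
      rw [← RMC.Dmat_Smap m y]
    rw [hpre, ← Measure.map_apply (measurable_pi_lambda _ fun p =>
      (measurable_pi_apply p.2).comp (measurable_pi_apply p.1)) hZ'meas,
      RMC.map_uncurry_pi]
    exact RMC.mvpoly_null _ (RMC.subQ_ne_zero m)
  have hbad : μ (Y ⁻¹' B) = 0 := by
    rw [← Measure.map_apply hYmeas hBmeas]
    exact hAC hpiκ
  have hae : ∀ᵐ ω ∂μ, RMC.Dmat m (X ω) ≠ 0 := by
    have h' := MeasureTheory.measure_eq_zero_iff_ae_notMem.mp hbad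
    filter_upwards [h'] with ω hω h
    apply hω
    show RMC.Dmat m (Matrix.of (Y ω)) = 0
    rw [hYdef]
    exact h
  filter_upwards [hae] with ω hω
  exact RMC.conclusions m (X ω) hω
end

section
/- Let x, y ∈ (0,1) with x + y ≠ 1 and let P be the 2×2 row-stochastic matrix with rows (1−x, x) and (y, 1−y). Then P is irreducible and aperiodic, and P is Benford if and only if log₁₀|1−x−y| is irrational. -/
open Filter Topology MeasureTheory
open scoped Classical

/-- Hermite's identity. -/
lemma hermite_sum (q : ℕ) (hq : 0 < q) (t : ℝ) :
    ∑ r ∈ Finset.range q, ⌊t + (r : ℝ) / q⌋ = ⌊(q : ℝ) * t⌋ := by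
  have hq0 : (0:ℝ) < q := by exact_mod_cast hq
  set d : ℤ := ⌊t⌋ with hd
  set m : ℤ := ⌊(q:ℝ) * t⌋ with hm
  set fm : ℝ := (q:ℝ) * t - m with hfm
  have hfm0 : 0 ≤ fm := by
    have := Int.floor_le ((q:ℝ)*t); simp only [hfm]; linarith
  have hfm1 : fm < 1 := by
    have := Int.lt_floor_add_one ((q:ℝ)*t); simp only [hfm]; push_cast at this ⊢; linarith
  set s : ℤ := m - q * d with hs
  have hs0 : 0 ≤ s := by
    have h1 : (d:ℝ) ≤ t := Int.floor_le t
    have : (q:ℤ) * d ≤ m := Int.le_floor.2 (by push_cast; nlinarith)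
    omega
  have hsq : s < q := by
    have h2 : t < d + 1 := Int.lt_floor_add_one t
    have : m < (q:ℤ) * d + q := Int.floor_lt.2 (by push_cast; nlinarith)
    omega
  have hteq : ∀ r : ℕ, t + (r:ℝ)/q = d + ((s:ℝ) + r + fm)/q := by
    intro r
    have : (q:ℝ) * t = q * d + s + fm := by
      simp only [hfm, hs]; push_cast; ring
    field_simp
    nlinarith
  have key : ∀ r ∈ Finset.range q, ⌊t + (r:ℝ)/q⌋ = d + (if (q:ℤ) ≤ s + r then 1 else 0) := by
    intro r hr
    have hrq : (r:ℤ) < q := by exact_mod_cast Finset.mem_range.1 hr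
    rw [hteq r]
    by_cases h : (q:ℤ) ≤ s + r
    · rw [if_pos h]
      apply Int.floor_eq_iff.2
      have hq' : (q:ℝ) ≤ (s:ℝ) + r := by exact_mod_cast h
      constructor
      · push_cast
        have : 1 ≤ ((s:ℝ) + r + fm)/q := by
          rw [le_div_iff₀ hq0]; linarith
        linarith
      · push_cast
        have hs' : (s:ℝ) + 1 ≤ q := by exact_mod_cast Int.add_one_le_of_lt hsq
        have hr' : (r:ℝ) + 1 ≤ q := by exact_mod_cast Int.add_one_le_of_lt hrq
        have h1 : ((s:ℝ) + r + fm)/q < 2 := by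
          rw [div_lt_iff₀ hq0]; nlinarith
        linarith
    · rw [if_neg h]
      push_neg at h
      apply Int.floor_eq_iff.2
      have hq' : (s:ℝ) + r + 1 ≤ (q:ℝ) := by exact_mod_cast h
      constructor
      · have hsr : (0:ℝ) ≤ s := by exact_mod_cast hs0
        have : 0 ≤ ((s:ℝ) + r + fm)/q := by positivity
        push_cast; linarith
      · push_cast
        have h1 : ((s:ℝ) + r + fm)/q < 1 := by
          rw [div_lt_one hq0]; linarith
        linarith
  rw [Finset.sum_congr rfl key, Finset.sum_add_distrib, Finset.sum_const, Finset.card_range,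
    Finset.sum_ite, Finset.sum_const, Finset.sum_const_zero]
  have hfilter : (Finset.range q).filter (fun r : ℕ => (q:ℤ) ≤ s + (r:ℤ)) = Finset.Ico (q - s.toNat) q := by
    ext r
    simp only [Finset.mem_filter, Finset.mem_range, Finset.mem_Ico]
    omega
  rw [hfilter, Nat.card_Ico]
  simp only [nsmul_eq_mul, smul_eq_mul, mul_one]
  omega

lemma sum_floor_coprime (q : ℕ) (hq : 0 < q) (p : ℤ) (hco : Int.gcd p q = 1) (t : ℝ) :
    ∑ j ∈ Finset.Ioc 0 q, ⌊t + (j : ℝ) * p / q⌋ =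
      (∑ j ∈ Finset.Ioc 0 q, ((j : ℤ) * p / (q : ℤ))) + ⌊(q : ℝ) * t⌋ := by
  have hq0 : (0:ℝ) < q := by exact_mod_cast hq
  have hqz : (0:ℤ) < q := by exact_mod_cast hq
  have step : ∀ j ∈ Finset.Ioc 0 q,
      ⌊t + (j : ℝ) * p / q⌋ = ((j:ℤ) * p / (q:ℤ)) + ⌊t + ((((j:ℤ) * p) % q : ℤ) : ℝ) / q⌋ := by
    intro j _
    have kz : (j:ℤ)*p = ((j:ℤ)*p % q) + ((j:ℤ)*p/(q:ℤ)) * q := by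
      have := Int.mul_ediv_add_emod ((j:ℤ)*p) q; linarith
    have hsplit : (j:ℝ) * p / q = ((((j:ℤ)*p % q : ℤ)):ℝ)/q + ((((j:ℤ)*p/(q:ℤ)) : ℤ):ℝ) := by
      field_simp
      exact_mod_cast (show (j:ℤ)*p = ((j:ℤ)*p % q) + q * ((j:ℤ)*p/(q:ℤ)) by linarith)
    have : t + (j : ℝ) * p / q = (t + ((((j:ℤ) * p) % q : ℤ) : ℝ) / q) + ((j:ℤ)*p/(q:ℤ) : ℤ) := by
      rw [hsplit]; ring
    rw [this, Int.floor_add_intCast]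
    ring
  rw [Finset.sum_congr rfl step, Finset.sum_add_distrib]
  congr 1
  -- reindex
  set f : ℕ → ℕ := fun j => (((j:ℤ) * p) % q).toNat with hf
  have hinj : ∀ x ∈ Finset.Ioc 0 q, ∀ y ∈ Finset.Ioc 0 q, f x = f y → x = y := by
    intro a ha b hb hab
    simp only [Finset.mem_Ioc] at ha hb
    have h1 : ((a:ℤ) * p) % q = ((b:ℤ) * p) % q := by
      have e1 : (0:ℤ) ≤ ((a:ℤ) * p) % q := Int.emod_nonneg _ (by omega)
      have e2 : (0:ℤ) ≤ ((b:ℤ) * p) % q := Int.emod_nonneg _ (by omega)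
      have hab' : (((a:ℤ) * p) % q).toNat = (((b:ℤ) * p) % q).toNat := hab
      omega
    have hdvd : (q:ℤ) ∣ ((b:ℤ) - a) * p := by
      have := Int.ModEq.dvd (h1 : Int.ModEq q ((a:ℤ)*p) ((b:ℤ)*p))
      convert this using 1; ring
    have hcop : IsCoprime (q:ℤ) p := by
      rw [Int.isCoprime_iff_gcd_eq_one, Int.gcd_comm]
      exact hco
    have : (q:ℤ) ∣ ((b:ℤ) - a) := hcop.dvd_of_dvd_mul_right hdvd
    have : (b:ℤ) - a = 0 := Int.eq_zero_of_abs_lt_dvd this (by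
      rw [abs_lt]; omega)
    omega
  have himg : (Finset.Ioc 0 q).image f = Finset.range q := by
    apply Finset.eq_of_subset_of_card_le
    · intro r hr
      simp only [Finset.mem_image] at hr
      obtain ⟨j, _, rfl⟩ := hr
      simp only [Finset.mem_range, hf]
      have := Int.emod_lt_of_pos ((j:ℤ)*p) hqz
      have := Int.emod_nonneg ((j:ℤ)*p) (show (q:ℤ) ≠ 0 by omega)
      omega
    · rw [Finset.card_range, Finset.card_image_of_injOn (fun a ha b hb => hinj a ha b hb),
        Nat.card_Ioc]
      omega
  have := Finset.sum_image (g := f) (f := fun r : ℕ => ⌊t + (r:ℝ)/(q:ℝ)⌋)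
    (s := Finset.Ioc 0 q) hinj
  rw [himg] at this
  rw [← hermite_sum q hq t]
  rw [this]
  apply Finset.sum_congr rfl
  intro j hj
  congr 2
  simp only [hf]
  have hnn : (0:ℤ) ≤ (j:ℤ) * p % ↑q := Int.emod_nonneg _ (by omega)
  congr 1
  exact_mod_cast (Int.toNat_of_nonneg hnn).symm

/-- indicator via floors -/
lemma ind_eq_indicator {a b : ℝ} (h0 : 0 ≤ a) (hab : a ≤ b) (hb : b ≤ 1) (x : ℝ) :
    (⌊x - a⌋ - ⌊x - b⌋ : ℤ) = if Int.fract x ∈ Set.Ico a b then 1 else 0 := by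
  have hxa : x - a = (⌊x⌋ : ℝ) + (Int.fract x - a) := by
    have := Int.floor_add_fract x; linarith
  have hxb : x - b = (⌊x⌋ : ℝ) + (Int.fract x - b) := by
    have := Int.floor_add_fract x; linarith
  have hf0 : 0 ≤ Int.fract x := Int.fract_nonneg x
  have hf1 : Int.fract x < 1 := Int.fract_lt_one x
  by_cases hmem : Int.fract x ∈ Set.Ico a b
  · obtain ⟨h1, h2⟩ := hmem
    rw [if_pos ⟨h1, h2⟩]
    have e1 : ⌊x - a⌋ = ⌊x⌋ := by
      rw [hxa, add_comm, Int.floor_add_intCast, Int.floor_eq_zero_iff.2 ⟨by linarith, by linarith⟩,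
        zero_add]
    have e2 : ⌊x - b⌋ = ⌊x⌋ - 1 := by
      rw [hxb, add_comm, Int.floor_add_intCast]
      have : ⌊Int.fract x - b⌋ = -1 := by
        apply Int.floor_eq_iff.2
        constructor <;> push_cast <;> [linarith; linarith]
      omega
    omega
  · rw [if_neg hmem]
    simp only [Set.mem_Ico, not_and, not_lt] at hmem
    by_cases hcase : a ≤ Int.fract x
    · -- fract ≥ b
      have hgeb : b ≤ Int.fract x := hmem hcase
      have e1 : ⌊x - a⌋ = ⌊x⌋ := by
        rw [hxa, add_comm, Int.floor_add_intCast, Int.floor_eq_zero_iff.2 ⟨by linarith, by linarith⟩,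
          zero_add]
      have e2 : ⌊x - b⌋ = ⌊x⌋ := by
        rw [hxb, add_comm, Int.floor_add_intCast, Int.floor_eq_zero_iff.2 ⟨by linarith, by linarith⟩,
          zero_add]
      omega
    · push_neg at hcase
      have e1 : ⌊x - a⌋ = ⌊x⌋ - 1 := by
        rw [hxa, add_comm, Int.floor_add_intCast]
        have : ⌊Int.fract x - a⌋ = -1 := by
          apply Int.floor_eq_iff.2
          constructor <;> push_cast <;> [linarith; linarith]
        omega
      have e2 : ⌊x - b⌋ = ⌊x⌋ - 1 := by
        rw [hxb, add_comm, Int.floor_add_intCast]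
        have : ⌊Int.fract x - b⌋ = -1 := by
          apply Int.floor_eq_iff.2
          constructor <;> push_cast <;> [linarith; linarith]
        omega
      omega

section Block

variable {α : ℝ} {p : ℤ} {q : ℕ}

lemma block_bound (hq : 0 < q) (hco : Int.gcd p q = 1)
    (happrox : |α - (p : ℝ) / q| ≤ 1 / (q : ℝ) ^ 2) (γ a b : ℝ)
    (hab : a ≤ b) :
    |(∑ j ∈ Finset.Ioc 0 q, (⌊γ + (j : ℝ) * α - a⌋ - ⌊γ + (j : ℝ) * α - b⌋ : ℤ) : ℝ)
      - (q : ℝ) * (b - a)| ≤ 3 := by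
  have hq0 : (0:ℝ) < q := by exact_mod_cast hq
  have habs := abs_le.1 happrox
  rw [← Int.cast_sum]
  -- floor sandwich for each j and each c
  have sandwich : ∀ c : ℝ, ∀ j ∈ Finset.Ioc 0 q,
      ⌊(γ - c - 1/q) + (j:ℝ) * p / q⌋ ≤ ⌊γ + (j:ℝ) * α - c⌋ ∧
      ⌊γ + (j:ℝ) * α - c⌋ ≤ ⌊(γ - c + 1/q) + (j:ℝ) * p / q⌋ := by
    intro c j hj
    simp only [Finset.mem_Ioc] at hj
    have hj0 : (0:ℝ) < j := by exact_mod_cast hj.1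
    have hjq : (j:ℝ) ≤ q := by exact_mod_cast hj.2
    constructor
    · apply Int.floor_le_floor
      have h1 : (j:ℝ) * (α - p/q) ≥ -(1/q) := by
        have h2 : (j:ℝ) * (α - p/q) ≥ -((j:ℝ) * (1/q^2)) := by nlinarith
        have h3 : (j:ℝ) * (1/q^2) ≤ 1/q := by
          rw [mul_one_div, div_le_div_iff₀ (by positivity) hq0]
          nlinarith
        linarith
      have : (j:ℝ) * α = (j:ℝ) * p / q + (j:ℝ) * (α - p/q) := by ring
      linarith
    · apply Int.floor_le_floor
      have h1 : (j:ℝ) * (α - p/q) ≤ 1/q := by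
        have h2 : (j:ℝ) * (α - p/q) ≤ (j:ℝ) * (1/q^2) := by nlinarith
        have h3 : (j:ℝ) * (1/q^2) ≤ 1/q := by
          rw [mul_one_div, div_le_div_iff₀ (by positivity) hq0]
          nlinarith
        linarith
      have : (j:ℝ) * α = (j:ℝ) * p / q + (j:ℝ) * (α - p/q) := by ring
      linarith
  set D : ℤ := ∑ j ∈ Finset.Ioc 0 q, ((j : ℤ) * p / (q : ℤ)) with hD
  have Sle : ∀ c : ℝ, (D + ⌊(q:ℝ) * (γ - c - 1/q)⌋ ≤ ∑ j ∈ Finset.Ioc 0 q, ⌊γ + (j:ℝ) * α - c⌋) ∧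
      (∑ j ∈ Finset.Ioc 0 q, ⌊γ + (j:ℝ) * α - c⌋ ≤ D + ⌊(q:ℝ) * (γ - c + 1/q)⌋) := by
    intro c
    constructor
    · rw [← sum_floor_coprime q hq p hco (γ - c - 1/q)]
      exact Finset.sum_le_sum (fun j hj => (sandwich c j hj).1)
    · rw [← sum_floor_coprime q hq p hco (γ - c + 1/q)]
      exact Finset.sum_le_sum (fun j hj => (sandwich c j hj).2)
  have key : ∑ j ∈ Finset.Ioc 0 q, (⌊γ + (j : ℝ) * α - a⌋ - ⌊γ + (j : ℝ) * α - b⌋ : ℤ)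
      = (∑ j ∈ Finset.Ioc 0 q, ⌊γ + (j:ℝ) * α - a⌋) - ∑ j ∈ Finset.Ioc 0 q, ⌊γ + (j:ℝ) * α - b⌋ :=
    Finset.sum_sub_distrib _ _
  rw [key]
  have u1 := (Sle a).2
  have u2 := (Sle a).1
  have v1 := (Sle b).2
  have v2 := (Sle b).1
  have fa1 : ((⌊(q:ℝ) * (γ - a + 1/q)⌋ : ℤ) : ℝ) ≤ q * (γ - a + 1/q) := Int.floor_le _
  have fa2 : (q:ℝ) * (γ - a - 1/q) - 1 < ((⌊(q:ℝ) * (γ - a - 1/q)⌋ : ℤ) : ℝ) := by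
    have := Int.lt_floor_add_one ((q:ℝ) * (γ - a - 1/q)); linarith
  have fb1 : ((⌊(q:ℝ) * (γ - b + 1/q)⌋ : ℤ) : ℝ) ≤ q * (γ - b + 1/q) := Int.floor_le _
  have fb2 : (q:ℝ) * (γ - b - 1/q) - 1 < ((⌊(q:ℝ) * (γ - b - 1/q)⌋ : ℤ) : ℝ) := by
    have := Int.lt_floor_add_one ((q:ℝ) * (γ - b - 1/q)); linarith
  rw [abs_le]
  have e1 : (q:ℝ) * (γ - a + 1/q) = q * (γ - a) + 1 := by field_simp
  have e2 : (q:ℝ) * (γ - a - 1/q) = q * (γ - a) - 1 := by field_simp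
  have e3 : (q:ℝ) * (γ - b + 1/q) = q * (γ - b) + 1 := by field_simp
  have e4 : (q:ℝ) * (γ - b - 1/q) = q * (γ - b) - 1 := by field_simp
  have u1r : ((∑ j ∈ Finset.Ioc 0 q, ⌊γ + (j:ℝ) * α - a⌋ : ℤ) : ℝ)
      ≤ ((D + ⌊(q:ℝ) * (γ - a + 1/q)⌋ : ℤ) : ℝ) := by exact_mod_cast u1
  have u2r : ((D + ⌊(q:ℝ) * (γ - a - 1/q)⌋ : ℤ) : ℝ)
      ≤ ((∑ j ∈ Finset.Ioc 0 q, ⌊γ + (j:ℝ) * α - a⌋ : ℤ) : ℝ) := by exact_mod_cast u2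
  have v1r : ((∑ j ∈ Finset.Ioc 0 q, ⌊γ + (j:ℝ) * α - b⌋ : ℤ) : ℝ)
      ≤ ((D + ⌊(q:ℝ) * (γ - b + 1/q)⌋ : ℤ) : ℝ) := by exact_mod_cast v1
  have v2r : ((D + ⌊(q:ℝ) * (γ - b - 1/q)⌋ : ℤ) : ℝ)
      ≤ ((∑ j ∈ Finset.Ioc 0 q, ⌊γ + (j:ℝ) * α - b⌋ : ℤ) : ℝ) := by exact_mod_cast v2
  rw [Int.cast_sub]
  rw [Int.cast_add] at u1r u2r v1r v2r
  constructor
  · linarith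
  · linarith

lemma blocks_bound (hq : 0 < q) (hco : Int.gcd p q = 1)
    (happrox : |α - (p : ℝ) / q| ≤ 1 / (q : ℝ) ^ 2) (β a b : ℝ)
    (hab : a ≤ b) (K : ℕ) :
    |(∑ n ∈ Finset.Ioc 0 (K * q), (⌊(n:ℝ) * α + β - a⌋ - ⌊(n:ℝ) * α + β - b⌋ : ℤ) : ℝ)
      - ((K * q : ℕ) : ℝ) * (b - a)| ≤ 3 * K := by
  induction K with
  | zero => simp
  | succ K ih =>
    have hle : K * q ≤ (K + 1) * q := by nlinarith
    have hsplit := Finset.sum_Ioc_consecutive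
      (fun n : ℕ => (⌊(n:ℝ) * α + β - a⌋ - ⌊(n:ℝ) * α + β - b⌋ : ℤ)) (Nat.zero_le (K * q)) hle
    rw [← Int.cast_sum, ← hsplit]
    -- second sum is a block
    have hmap : Finset.Ioc (K * q) ((K + 1) * q) = Finset.map (addLeftEmbedding (K * q)) (Finset.Ioc 0 q) := by
      rw [Finset.map_add_left_Ioc, add_zero]
      congr 1
      ring
    have hblock : ∑ n ∈ Finset.Ioc (K * q) ((K + 1) * q),
        (⌊(n:ℝ) * α + β - a⌋ - ⌊(n:ℝ) * α + β - b⌋ : ℤ)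
        = ∑ j ∈ Finset.Ioc 0 q,
          (⌊((K * q : ℕ) : ℝ) * α + β + (j:ℝ) * α - a⌋ - ⌊((K * q : ℕ) : ℝ) * α + β + (j:ℝ) * α - b⌋ : ℤ) := by
      rw [hmap, Finset.sum_map]
      apply Finset.sum_congr rfl
      intro j _
      have harg : ∀ c : ℝ, ((addLeftEmbedding (K * q) j : ℕ) : ℝ) * α + β - c
          = ((K * q : ℕ) : ℝ) * α + β + (j:ℝ) * α - c := by
        intro c
        simp only [addLeftEmbedding_apply]
        push_cast
        ring
      rw [harg a, harg b]
    rw [hblock]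
    have hB := block_bound hq hco happrox (((K * q : ℕ) : ℝ) * α + β) a b hab
    have : ∀ j : ℕ, (((K * q : ℕ) : ℝ) * α + β) + (j:ℝ) * α = ((K * q : ℕ) : ℝ) * α + β + (j:ℝ) * α := fun _ => rfl
    push_cast at ih hB ⊢
    rw [abs_le] at ih hB ⊢
    constructor <;> nlinarith [ih.1, ih.2, hB.1, hB.2]

end Block

lemma exists_good_approx (α : ℝ) (hα : Irrational α) (Q : ℕ) :
    ∃ (p : ℤ) (q : ℕ), Q < q ∧ Int.gcd p q = 1 ∧ |α - (p : ℝ) / q| ≤ 1 / (q : ℝ) ^ 2 := by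
  have hS : {r : ℚ | |α - r| < 1 / (r.den : ℝ) ^ 2}.Infinite :=
    (Real.infinite_rat_abs_sub_lt_one_div_den_sq_iff_irrational α).2 hα
  set M : ℤ := ⌈|α| + 1⌉ * Q with hM
  have hT : {r : ℚ | r.den ≤ Q ∧ |(r : ℝ)| ≤ |α| + 1}.Finite := by
    have hsub : {r : ℚ | r.den ≤ Q ∧ |(r : ℝ)| ≤ |α| + 1} ⊆
        (fun r : ℚ => (r.num, r.den)) ⁻¹' (Set.Icc (-M) M ×ˢ Set.Icc 0 Q) := by
      intro r hr
      obtain ⟨hden, habs⟩ := hr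
      have hden0 : (0:ℝ) < r.den := by positivity
      have hnum : |(r.num : ℝ)| ≤ ((M : ℤ) : ℝ) := by
        have h1 : |(r : ℝ)| = |(r.num : ℝ)| / r.den := by
          rw [Rat.cast_def, abs_div, abs_of_pos hden0]
        have h2 : |(r.num : ℝ)| ≤ (|α| + 1) * r.den := by
          rw [h1] at habs
          rw [div_le_iff₀ hden0] at habs
          linarith
        have h3 : (|α| + 1) * r.den ≤ ⌈|α| + 1⌉ * Q := by
          have c1 : |α| + 1 ≤ (⌈|α| + 1⌉ : ℝ) := Int.le_ceil _
          have c2 : (r.den : ℝ) ≤ Q := by exact_mod_cast hden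
          have c3 : (0:ℝ) < ⌈|α| + 1⌉ := lt_of_lt_of_le (by positivity) c1
          nlinarith
        calc |(r.num : ℝ)| ≤ (|α| + 1) * r.den := h2
          _ ≤ ⌈|α| + 1⌉ * Q := h3
          _ = ((M : ℤ) : ℝ) := by rw [hM]; push_cast; ring
      constructor
      · constructor
        · have : -((M:ℤ):ℝ) ≤ (r.num : ℝ) := by
            have := abs_le.1 hnum; exact this.1
          exact_mod_cast this
        · have := (abs_le.1 hnum).2
          exact_mod_cast this
      · exact ⟨Nat.zero_le _, hden⟩
    apply Set.Finite.subset _ hsub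
    apply Set.Finite.preimage
    · intro r₁ _ r₂ _ h
      simp only [Prod.mk.injEq] at h
      exact Rat.ext h.1 h.2
    · exact (Set.finite_Icc _ _).prod (Set.finite_Icc _ _)
  have : ¬ {r : ℚ | |α - r| < 1 / (r.den : ℝ) ^ 2} ⊆
      {r : ℚ | r.den ≤ Q ∧ |(r : ℝ)| ≤ |α| + 1} := fun hsub => hS (hT.subset hsub)
  obtain ⟨r, hrS, hrT⟩ := Set.not_subset.1 this
  have hden0 : (0:ℝ) < r.den := by positivity
  have hrd : Q < r.den := by
    by_contra hle
    push_neg at hle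
    apply hrT
    refine ⟨hle, ?_⟩
    have h1 : |α - r| < 1 := by
      refine lt_of_lt_of_le hrS ?_
      rw [div_le_one (by positivity)]
      have : (1:ℝ) ≤ r.den := by exact_mod_cast r.pos
      nlinarith
    have := abs_sub_abs_le_abs_sub (r : ℝ) α
    rw [abs_sub_comm] at h1
    linarith [abs_le.1 h1.le, neg_abs_le α, le_abs_self α, abs_sub_abs_le_abs_sub (r:ℝ) α]
  refine ⟨r.num, r.den, hrd, ?_, ?_⟩
  · have := r.reduced
    simpa [Int.gcd] using this
  · rw [← Rat.cast_def]
    exact hrS.le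

set_option maxHeartbeats 1000000 in
theorem tendsto_fract_Ico (α : ℝ) (hα : Irrational α) (β a b : ℝ)
    (h0 : 0 ≤ a) (hab : a ≤ b) (hb : b ≤ 1) :
    Tendsto (fun N : ℕ =>
      (((Finset.Icc 1 N).filter fun n : ℕ => Int.fract ((n:ℝ) * α + β) ∈ Set.Ico a b).card : ℝ)
        / (N : ℝ)) atTop (𝓝 (b - a)) := by
  have card_eq : ∀ N : ℕ,
      (((Finset.Icc 1 N).filter fun n : ℕ => Int.fract ((n:ℝ) * α + β) ∈ Set.Ico a b).card : ℝ)
      = ((∑ n ∈ Finset.Ioc 0 N, (⌊(n:ℝ) * α + β - a⌋ - ⌊(n:ℝ) * α + β - b⌋ : ℤ) : ℤ) : ℝ) := by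
    intro N
    have hIcc : Finset.Icc 1 N = Finset.Ioc 0 N := rfl
    rw [hIcc, Finset.card_filter]
    push_cast
    apply Finset.sum_congr rfl
    intro n _
    have hni := ind_eq_indicator h0 hab hb ((n:ℝ) * α + β)
    have hni' : ((⌊(n:ℝ)*α+β - a⌋ - ⌊(n:ℝ)*α+β - b⌋ : ℤ):ℝ)
        = ((if Int.fract ((n:ℝ)*α+β) ∈ Set.Ico a b then (1:ℤ) else 0 : ℤ):ℝ) := by
      exact_mod_cast congrArg (fun z : ℤ => (z:ℝ)) hni
    push_cast at hni'
    exact hni'.symm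
  have ind01 : ∀ x : ℝ, (0:ℤ) ≤ ⌊x - a⌋ - ⌊x - b⌋ ∧ (⌊x - a⌋ - ⌊x - b⌋ : ℤ) ≤ 1 := by
    intro x
    rw [ind_eq_indicator h0 hab hb x]
    split_ifs <;> omega
  rw [Metric.tendsto_atTop]
  intro ε hε
  obtain ⟨p, q, hqQ, hco, happrox⟩ := exists_good_approx α hα ⌈6/ε⌉₊
  have hq : 0 < q := lt_of_le_of_lt (Nat.zero_le _) hqQ
  have hq0 : (0:ℝ) < q := by exact_mod_cast hq
  have hq6 : 6 / ε ≤ (q : ℝ) := by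
    calc 6 / ε ≤ (⌈6/ε⌉₊ : ℝ) := Nat.le_ceil _
      _ ≤ q := by exact_mod_cast hqQ.le
  have h3q : 3 / (q:ℝ) ≤ ε / 2 := by
    rw [div_le_div_iff₀ hq0 (by norm_num : (0:ℝ) < 2)]
    rw [div_le_iff₀ hε] at hq6
    linarith
  refine ⟨⌈(q:ℝ)/(ε/4)⌉₊ + 1, fun N hN => ?_⟩
  have hN0 : 0 < N := lt_of_lt_of_le (Nat.succ_pos _) hN
  have hNR : (0:ℝ) < N := by exact_mod_cast hN0
  have hqN : (q:ℝ)/N < ε/4 := by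
    have h1 : (q:ℝ)/(ε/4) < N := by
      calc (q:ℝ)/(ε/4) ≤ (⌈(q:ℝ)/(ε/4)⌉₊ : ℝ) := Nat.le_ceil _
        _ < N := by exact_mod_cast lt_of_lt_of_le (Nat.lt_succ_self _) hN
    rw [div_lt_iff₀ hNR]
    rw [div_lt_iff₀ (by positivity : (0:ℝ) < ε/4)] at h1
    linarith
  set K := N / q with hK
  have hKq : K * q ≤ N := Nat.div_mul_le_self N q
  have hrem : N - K * q < q := by
    rw [hK]
    have := Nat.mod_add_div' N q
    have := Nat.mod_lt N hq
    omega
  -- split sum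
  have hsplit := Finset.sum_Ioc_consecutive
    (fun n : ℕ => (⌊(n:ℝ) * α + β - a⌋ - ⌊(n:ℝ) * α + β - b⌋ : ℤ)) (Nat.zero_le (K * q)) hKq
  -- tail bounds
  have htail0 : (0:ℤ) ≤ ∑ n ∈ Finset.Ioc (K*q) N, (⌊(n:ℝ) * α + β - a⌋ - ⌊(n:ℝ) * α + β - b⌋ : ℤ) :=
    Finset.sum_nonneg (fun n _ => (ind01 ((n:ℝ) * α + β)).1)
  have htail1 : ∑ n ∈ Finset.Ioc (K*q) N, (⌊(n:ℝ) * α + β - a⌋ - ⌊(n:ℝ) * α + β - b⌋ : ℤ)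
      ≤ (N - K*q : ℕ) := by
    calc ∑ n ∈ Finset.Ioc (K*q) N, (⌊(n:ℝ) * α + β - a⌋ - ⌊(n:ℝ) * α + β - b⌋ : ℤ)
        ≤ ∑ _n ∈ Finset.Ioc (K*q) N, (1:ℤ) :=
          Finset.sum_le_sum (fun n _ => (ind01 ((n:ℝ) * α + β)).2)
      _ = (N - K*q : ℕ) := by rw [Finset.sum_const, Nat.card_Ioc]; simp
  have hblocks := blocks_bound hq hco happrox β a b hab K
  -- assemble
  rw [Real.dist_eq, card_eq]
  have hround : ((N - K*q : ℕ) : ℝ) ≤ q := by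
    have : (N - K*q : ℕ) ≤ q := hrem.le
    exact_mod_cast this
  have hba0 : 0 ≤ b - a := by linarith
  have hba1 : b - a ≤ 1 := by linarith
  have habs : |((∑ n ∈ Finset.Ioc 0 N, (⌊(n:ℝ) * α + β - a⌋ - ⌊(n:ℝ) * α + β - b⌋ : ℤ) : ℤ) : ℝ)
      - (N:ℝ) * (b-a)| ≤ 3 * K + q := by
    rw [← hsplit]
    push_cast
    have htail0' : (0:ℝ) ≤ ((∑ n ∈ Finset.Ioc (K*q) N, (⌊(n:ℝ) * α + β - a⌋ - ⌊(n:ℝ) * α + β - b⌋ : ℤ) : ℤ):ℝ) := by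
      exact_mod_cast htail0
    have htail1' : ((∑ n ∈ Finset.Ioc (K*q) N, (⌊(n:ℝ) * α + β - a⌋ - ⌊(n:ℝ) * α + β - b⌋ : ℤ) : ℤ):ℝ)
        ≤ ((N - K*q : ℕ) : ℝ) := by exact_mod_cast htail1
    push_cast at htail0' htail1' hblocks
    have hNq : ((N:ℝ) - K*q) = ((N - K*q : ℕ) : ℝ) := by
      push_cast [Nat.cast_sub hKq]; ring
    rw [abs_le] at hblocks ⊢
    have hr1 : ((N - K*q : ℕ):ℝ) * (b - a) ≤ ((N - K*q : ℕ):ℝ) := by nlinarith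
    have hr2 : 0 ≤ ((N - K*q : ℕ):ℝ) * (b - a) := by positivity
    constructor
    · nlinarith [hblocks.1]
    · nlinarith [hblocks.2]
  have hKN : (K:ℝ) * q ≤ N := by exact_mod_cast hKq
  set X : ℝ := ((∑ n ∈ Finset.Ioc 0 N, (⌊(n:ℝ) * α + β - a⌋ - ⌊(n:ℝ) * α + β - b⌋ : ℤ) : ℤ) : ℝ) with hX
  have key : |X/N - (b-a)| = |X - N*(b-a)|/N := by
    rw [← abs_of_pos hNR, ← abs_div]
    congr 1
    field_simp
    rw [abs_of_pos hNR]; ring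
  rw [key]
  have h1 : |X - N*(b-a)|/N ≤ (3*K + q)/N := (div_le_div_iff_of_pos_right hNR).2 habs
  have h2 : ((3:ℝ)*K + q)/N = 3*K/N + q/N := by ring
  have h3 : (3:ℝ)*K/N ≤ 3/q := by
    rw [div_le_div_iff₀ hNR hq0]
    nlinarith [hKN]
  calc |X - N*(b-a)|/N ≤ 3*K/N + q/N := by rw [← h2]; exact h1
    _ < ε := by linarith


lemma tendsto_fract_le (α : ℝ) (hα : Irrational α) (β τ : ℝ) (h0 : 0 ≤ τ) (h1 : τ < 1) :
    Tendsto (fun N : ℕ =>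
      (((Finset.Icc 1 N).filter fun n : ℕ => Int.fract ((n:ℝ) * α + β) ≤ τ).card : ℝ)
        / (N : ℝ)) atTop (𝓝 τ) := by
  rw [Metric.tendsto_atTop]
  intro ε hε
  set b : ℝ := min (τ + ε/2) 1 with hbdef
  have hτb : τ < b := by
    rcases le_total (τ + ε/2) 1 with h | h
    · rw [hbdef, min_eq_left h]; linarith
    · rw [hbdef, min_eq_right h]; linarith
  have hb1 : b ≤ 1 := min_le_right _ _
  have hbτ : b ≤ τ + ε/2 := min_le_left _ _
  have Hlo := tendsto_fract_Ico α hα β 0 τ le_rfl h0 h1.le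
  have Hhi := tendsto_fract_Ico α hα β 0 b le_rfl (by linarith) hb1
  rw [Metric.tendsto_atTop] at Hlo Hhi
  obtain ⟨N₁, hN₁⟩ := Hlo (ε/2) (by linarith)
  obtain ⟨N₂, hN₂⟩ := Hhi (ε/4) (by linarith)
  refine ⟨max (max N₁ N₂) 1, fun N hN => ?_⟩
  have hNN₁ : N ≥ N₁ := le_trans (le_trans (le_max_left _ _) (le_max_left _ _)) hN
  have hNN₂ : N ≥ N₂ := le_trans (le_trans (le_max_right _ _) (le_max_left _ _)) hN
  have hN1 : 1 ≤ N := le_trans (le_max_right _ _) hN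
  have hNR : (0:ℝ) < N := by exact_mod_cast hN1
  have h₁ := hN₁ N hNN₁
  have h₂ := hN₂ N hNN₂
  rw [Real.dist_eq] at h₁ h₂ ⊢
  set Clo := ((Finset.Icc 1 N).filter fun n : ℕ => Int.fract ((n:ℝ) * α + β) ∈ Set.Ico 0 τ).card
  set Cmid := ((Finset.Icc 1 N).filter fun n : ℕ => Int.fract ((n:ℝ) * α + β) ≤ τ).card
  set Chi := ((Finset.Icc 1 N).filter fun n : ℕ => Int.fract ((n:ℝ) * α + β) ∈ Set.Ico 0 b).card
  have hsub1 : Clo ≤ Cmid := by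
    apply Finset.card_le_card
    intro n hn
    simp only [Finset.mem_filter, Set.mem_Ico] at hn ⊢
    exact ⟨hn.1, hn.2.2.le⟩
  have hsub2 : Cmid ≤ Chi := by
    apply Finset.card_le_card
    intro n hn
    simp only [Finset.mem_filter, Set.mem_Ico] at hn ⊢
    exact ⟨hn.1, Int.fract_nonneg _, lt_of_le_of_lt hn.2 hτb⟩
  have hm1 : (Clo:ℝ)/N ≤ (Cmid:ℝ)/N :=
    (div_le_div_iff_of_pos_right hNR).2 (by exact_mod_cast hsub1)
  have hm2 : (Cmid:ℝ)/N ≤ (Chi:ℝ)/N :=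
    (div_le_div_iff_of_pos_right hNR).2 (by exact_mod_cast hsub2)
  rw [abs_lt] at h₁ h₂ ⊢
  constructor
  · have := h₁.1
    simp only [sub_zero] at this
    linarith
  · have := h₂.2
    simp only [sub_zero] at this
    linarith

lemma signif_le_iff_s15 {z t : ℝ} (hz : 0 < z) (ht : 0 < t) :
    signif z ≤ t ↔ Int.fract (Real.logb 10 z) ≤ Real.logb 10 t := by
  have h10 : (1:ℝ) < 10 := by norm_num
  have hsig : signif z = (10:ℝ) ^ (Int.fract (Real.logb 10 z)) := by
    rw [signif, if_neg (ne_of_gt hz)]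
    have hznum : z = (10:ℝ) ^ (Real.logb 10 z) :=
      (Real.rpow_logb (by norm_num) (by norm_num) hz).symm
    have hzpow : ((10:ℝ) ^ (⌊Real.logb 10 z⌋ : ℤ)) = (10:ℝ) ^ ((⌊Real.logb 10 z⌋ : ℤ) : ℝ) :=
      (Real.rpow_intCast 10 _).symm
    rw [hzpow]
    nth_rewrite 1 [hznum]
    rw [← Real.rpow_sub (by norm_num), Int.self_sub_floor]
  have htnum : t = (10:ℝ) ^ (Real.logb 10 t) :=
    (Real.rpow_logb (by norm_num) (by norm_num) ht).symm
  rw [hsig]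
  nth_rewrite 1 [htnum]
  exact Real.rpow_le_rpow_left_iff h10

lemma signif_geom_iff {c r : ℝ} (hc : c ≠ 0) (hr : r ≠ 0) (n : ℕ) {t : ℝ} (ht : 0 < t) :
    signif |c * r ^ n| ≤ t ↔
      Int.fract ((n:ℝ) * Real.logb 10 |r| + Real.logb 10 |c|) ≤ Real.logb 10 t := by
  have hpos : 0 < |c * r ^ n| := by positivity
  rw [signif_le_iff_s15 hpos ht]
  have : Real.logb 10 |c * r ^ n| = (n:ℝ) * Real.logb 10 |r| + Real.logb 10 |c| := by
    rw [abs_mul, Real.logb_mul (by positivity) (by positivity), abs_pow, Real.logb_pow]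
    ring
  rw [this]

lemma benfordSeq_geom {c r : ℝ} (hc : c ≠ 0) (hr : r ≠ 0)
    (hL : Irrational (Real.logb 10 |r|)) : BenfordSeq (fun n => c * r ^ n) := by
  intro t ht1 ht10
  have ht0 : (0:ℝ) < t := by linarith
  have hτ0 : 0 ≤ Real.logb 10 t := Real.logb_nonneg (by norm_num) ht1
  have hτ1 : Real.logb 10 t < 1 := by
    have := Real.logb_lt_logb (b := 10) (by norm_num) ht0 ht10
    rwa [Real.logb_self_eq_one (by norm_num)] at this
  have H := tendsto_fract_le (Real.logb 10 |r|) hL (Real.logb 10 |c|) (Real.logb 10 t) hτ0 hτ1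
  have hset : (fun N : ℕ => (((Finset.Icc 1 N).filter fun n => signif |(fun k => c * r ^ k) n| ≤ t).card : ℝ) / (N:ℝ))
      = fun N : ℕ => (((Finset.Icc 1 N).filter fun n : ℕ =>
          Int.fract ((n:ℝ) * Real.logb 10 |r| + Real.logb 10 |c|) ≤ Real.logb 10 t).card : ℝ) / (N:ℝ) := by
    funext N
    congr 3
    apply Finset.filter_congr
    intro n _
    simpa using signif_geom_iff hc hr n ht0
  rw [hset]
  exact H

lemma irrational_of_benford_geom {c r : ℝ} (hc : c ≠ 0) (hr : r ≠ 0)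
    (hB : BenfordSeq (fun n => c * r ^ n)) : Irrational (Real.logb 10 |r|) := by
  set L := Real.logb 10 |r| with hLdef
  set B := Real.logb 10 |c| with hBdef
  by_contra hL
  obtain ⟨u, hu⟩ := not_not.1 hL
  set v : ℕ := u.den with hv
  have hv0 : 0 < v := u.pos
  have hvR : (0:ℝ) < v := by exact_mod_cast hv0
  set F : Finset ℝ := (Finset.range v).image (fun k : ℕ => Int.fract ((k:ℝ)/v + B)) with hF
  have hmem : ∀ n : ℕ, Int.fract ((n:ℝ) * L + B) ∈ F := by
    intro n
    set m : ℤ := n * u.num with hm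
    have hdm := Int.mul_ediv_add_emod m v
    have hcast : (m:ℝ) = (v:ℝ) * ((m / (v:ℤ) : ℤ):ℝ) + ((m % (v:ℤ) : ℤ):ℝ) := by
      exact_mod_cast hdm.symm
    have hnL : (n:ℝ) * L = ((m % (v:ℤ) : ℤ):ℝ)/v + ((m / (v:ℤ) : ℤ):ℝ) := by
      rw [← hu, Rat.cast_def]
      have hmr : (m:ℝ) = (n:ℝ) * u.num := by rw [hm]; push_cast; ring
      field_simp
      rw [← hmr]
      have hvd : (u.den:ℝ) = (v:ℝ) := rfl
      rw [hvd, hcast]; ring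
    have harg : (n:ℝ) * L + B = (((m % (v:ℤ) : ℤ):ℝ)/v + B) + ((m / (v:ℤ) : ℤ):ℝ) := by
      rw [hnL]; ring
    rw [harg]
    have : Int.fract ((((m % (v:ℤ) : ℤ):ℝ)/v + B) + ((m / (v:ℤ) : ℤ):ℝ)) =
        Int.fract (((m % (v:ℤ) : ℤ):ℝ)/v + B) := by
      rw [Int.fract_add_intCast]
    rw [this]
    simp only [hF, Finset.mem_image]
    refine ⟨(m % (v:ℤ)).toNat, ?_, ?_⟩
    · rw [Finset.mem_range]
      have h1 : 0 ≤ m % (v:ℤ) := Int.emod_nonneg _ (by exact_mod_cast hv0.ne')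
      have h2 : m % (v:ℤ) < v := Int.emod_lt_of_pos _ (by exact_mod_cast hv0)
      omega
    · congr 2
      congr 1
      exact_mod_cast Int.toNat_of_nonneg
        (Int.emod_nonneg _ (show ((v:ℤ)) ≠ 0 by exact_mod_cast hv0.ne'))
  have hcard : F.card ≤ v := le_trans Finset.card_image_le (le_of_eq (Finset.card_range v))
  have hgap : ∃ k : ℕ, k ≤ v ∧ ∀ f ∈ F, f ∉ Set.Ioc ((k:ℝ)/((v:ℝ)+1)) (((k:ℝ)+1)/((v:ℝ)+1)) := by
    by_contra hcon
    push_neg at hcon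
    have hchoice : ∀ k ∈ Finset.range (v+1),
        ∃ f, f ∈ F ∧ f ∈ Set.Ioc ((k:ℝ)/((v:ℝ)+1)) (((k:ℝ)+1)/((v:ℝ)+1)) := by
      intro k hk
      obtain ⟨f, hf1, hf2⟩ := hcon k (Nat.lt_succ_iff.1 (Finset.mem_range.1 hk))
      exact ⟨f, hf1, hf2⟩
    have hv1 : (0:ℝ) < (v:ℝ)+1 := by positivity
    classical
    set ψ : ℕ → ℝ := fun k => if h : k ∈ Finset.range (v+1) then (hchoice k h).choose else 0 with hψ
    have hψF : ∀ k ∈ Finset.range (v+1), ψ k ∈ F := by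
      intro k hk
      simp only [hψ, dif_pos hk]
      exact (hchoice k hk).choose_spec.1
    have hψI : ∀ k (hk : k ∈ Finset.range (v+1)),
        ψ k ∈ Set.Ioc ((k:ℝ)/((v:ℝ)+1)) (((k:ℝ)+1)/((v:ℝ)+1)) := by
      intro k hk
      simp only [hψ, dif_pos hk]
      exact (hchoice k hk).choose_spec.2
    have hinj : Set.InjOn ψ ↑(Finset.range (v+1)) := by
      intro k₁ h₁ k₂ h₂ h
      have h₁' := hψI k₁ h₁
      have h₂' := hψI k₂ h₂
      rw [h] at h₁'
      have c1 : ((k₁:ℝ))/((v:ℝ)+1) < ((k₂:ℝ)+1)/((v:ℝ)+1) := lt_of_lt_of_le h₁'.1 h₂'.2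
      have c2 : ((k₂:ℝ))/((v:ℝ)+1) < ((k₁:ℝ)+1)/((v:ℝ)+1) := lt_of_lt_of_le h₂'.1 h₁'.2
      rw [div_lt_div_iff_of_pos_right hv1] at c1 c2
      have : (k₁:ℝ) < k₂ + 1 := c1
      have : (k₂:ℝ) < k₁ + 1 := c2
      have e1 : k₁ < k₂ + 1 := by exact_mod_cast c1
      have e2 : k₂ < k₁ + 1 := by exact_mod_cast c2
      omega
    have := Finset.card_le_card_of_injOn ψ hψF hinj
    rw [Finset.card_range] at this
    omega
  obtain ⟨k, hkv, hgapF⟩ := hgap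
  have hv1 : (0:ℝ) < (v:ℝ)+1 := by positivity
  obtain ⟨τ₁, hτ₁⟩ : ∃ x : ℝ, x = (k:ℝ)/((v:ℝ)+1) + 1/(3*((v:ℝ)+1)) := ⟨_, rfl⟩
  obtain ⟨τ₂, hτ₂⟩ : ∃ x : ℝ, x = (k:ℝ)/((v:ℝ)+1) + 2/(3*((v:ℝ)+1)) := ⟨_, rfl⟩
  have hτ₁pos : 0 < τ₁ := by rw [hτ₁]; positivity
  have hτdiff : τ₂ - τ₁ = 1/(3*((v:ℝ)+1)) := by rw [hτ₁, hτ₂]; ring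
  have hτ12 : τ₁ < τ₂ := by
    have : (0:ℝ) < 1/(3*((v:ℝ)+1)) := by positivity
    linarith
  have hτ₂lt : τ₂ < 1 := by
    have hk' : (k:ℝ) ≤ v := by exact_mod_cast hkv
    have he : τ₂ = (3*(k:ℝ)+2)/(3*((v:ℝ)+1)) := by
      rw [hτ₂]; field_simp
    rw [he, div_lt_one (by positivity)]
    linarith
  have hIsub : Set.Ioc τ₁ τ₂ ⊆ Set.Ioc ((k:ℝ)/((v:ℝ)+1)) (((k:ℝ)+1)/((v:ℝ)+1)) := by
    intro x hx
    constructor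
    · have : (k:ℝ)/((v:ℝ)+1) < τ₁ := by
        rw [hτ₁]
        have : (0:ℝ) < 1/(3*((v:ℝ)+1)) := by positivity
        linarith
      linarith [hx.1]
    · have he : ((k:ℝ)+1)/((v:ℝ)+1) - τ₂ = 1/(3*((v:ℝ)+1)) := by
        rw [hτ₂]; field_simp; ring
      have : (0:ℝ) < 1/(3*((v:ℝ)+1)) := by positivity
      linarith [hx.2]
  have hiff : ∀ n : ℕ, (Int.fract ((n:ℝ)*L + B) ≤ τ₁) ↔ (Int.fract ((n:ℝ)*L + B) ≤ τ₂) := by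
    intro n
    constructor
    · exact fun h => h.trans hτ12.le
    · intro h
      by_contra hnot
      push_neg at hnot
      exact hgapF _ (hmem n) (hIsub ⟨hnot, h⟩)
  have h10 : (1:ℝ) < 10 := by norm_num
  set t₁ : ℝ := (10:ℝ) ^ τ₁ with ht₁def
  set t₂ : ℝ := (10:ℝ) ^ τ₂ with ht₂def
  have hlog₁ : Real.logb 10 t₁ = τ₁ := Real.logb_rpow (by norm_num) (by norm_num)
  have hlog₂ : Real.logb 10 t₂ = τ₂ := Real.logb_rpow (by norm_num) (by norm_num)
  have ht₁pos : 0 < t₁ := Real.rpow_pos_of_pos (by norm_num) _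
  have ht₂pos : 0 < t₂ := Real.rpow_pos_of_pos (by norm_num) _
  have h1eq : (1:ℝ) = (10:ℝ) ^ (0:ℝ) := (Real.rpow_zero 10).symm
  have h10eq : (10:ℝ) = (10:ℝ) ^ (1:ℝ) := (Real.rpow_one 10).symm
  have ht₁1 : 1 ≤ t₁ := by
    rw [h1eq, ht₁def]
    exact (Real.rpow_le_rpow_left_iff h10).2 hτ₁pos.le
  have ht₂1 : 1 ≤ t₂ := by
    rw [h1eq, ht₂def]
    exact (Real.rpow_le_rpow_left_iff h10).2 (by linarith)
  have ht₁lt : t₁ < 10 := by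
    rw [ht₁def]
    nth_rewrite 2 [h10eq]
    exact (Real.rpow_lt_rpow_left_iff h10).2 (by linarith)
  have ht₂lt : t₂ < 10 := by
    rw [ht₂def]
    nth_rewrite 2 [h10eq]
    exact (Real.rpow_lt_rpow_left_iff h10).2 hτ₂lt
  have H₁ := hB t₁ ht₁1 ht₁lt
  have H₂ := hB t₂ ht₂1 ht₂lt
  have hfun : (fun N : ℕ =>
      (((Finset.Icc 1 N).filter fun n => signif |(fun k => c*r^k) n| ≤ t₁).card : ℝ)/(N:ℝ))
      = (fun N : ℕ =>
      (((Finset.Icc 1 N).filter fun n => signif |(fun k => c*r^k) n| ≤ t₂).card : ℝ)/(N:ℝ)) := by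
    funext N
    congr 3
    apply Finset.filter_congr
    intro n _
    have e₁ := signif_geom_iff hc hr n ht₁pos
    have e₂ := signif_geom_iff hc hr n ht₂pos
    simp only at e₁ e₂ ⊢
    rw [e₁, e₂, hlog₁, hlog₂]
    exact hiff n
  rw [hfun] at H₁
  have heq := tendsto_nhds_unique H₁ H₂
  rw [hlog₁, hlog₂] at heq
  exact (ne_of_lt hτ12) heq

lemma pow_formula (x y : ℝ) (hs : x + y ≠ 0) (n : ℕ) :
    (!![1 - x, x; y, 1 - y] : Matrix (Fin 2) (Fin 2) ℝ) ^ n =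
      !![(y + x*(1-x-y)^n)/(x+y), (x + (-x)*(1-x-y)^n)/(x+y);
         (y + (-y)*(1-x-y)^n)/(x+y), (x + y*(1-x-y)^n)/(x+y)] := by
  induction n with
  | zero =>
    rw [pow_zero]
    ext i j
    fin_cases i <;> fin_cases j <;> simp [Matrix.one_apply] <;> (try field_simp) <;> (try ring)
  | succ n ih =>
    rw [pow_succ, ih, Matrix.mul_fin_two]
    ext i j
    fin_cases i <;> fin_cases j <;>
      · simp only [Matrix.cons_val', Matrix.cons_val_zero, Matrix.cons_val_one,
          Matrix.head_cons, Matrix.head_fin_const, Matrix.empty_val',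
          Matrix.cons_val_fin_one]
        rw [pow_succ]
        field_simp
        ring

/-- the general 2×2 case; `P` is Benford iff `log₁₀ |1 - x - y|` is irrational. -/
theorem two_state_benford_iff (x y : ℝ) (hx : x ∈ Set.Ioo (0 : ℝ) 1)
    (hy : y ∈ Set.Ioo (0 : ℝ) 1) (hxy : x + y ≠ 1) :
    RowStochastic !![1 - x, x; y, 1 - y] ∧
    Primitive !![1 - x, x; y, 1 - y] ∧
    ∀ Pstar : Matrix (Fin 2) (Fin 2) ℝ,
      (∀ i j, Tendsto (fun n : ℕ => (!![1 - x, x; y, 1 - y] ^ n) i j) atTop (𝓝 (Pstar i j))) →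
      (MatrixBenford !![1 - x, x; y, 1 - y] Pstar ↔
        Irrational (Real.logb 10 |1 - x - y|)) := by
  obtain ⟨hx0, hx1⟩ := hx
  obtain ⟨hy0, hy1⟩ := hy
  have hs0 : 0 < x + y := by linarith
  have hs : x + y ≠ 0 := ne_of_gt hs0
  have hlam1 : |1 - x - y| < 1 := by rw [abs_lt]; constructor <;> linarith
  have hlamne : (1 - x - y) ≠ 0 := fun h => hxy (by linarith)
  refine ⟨⟨?_, ?_⟩, ⟨1, one_pos, ?_⟩, ?_⟩
  · intro i j
    fin_cases i <;> fin_cases j <;> simp <;> linarith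
  · intro i
    fin_cases i <;> simp [Fin.sum_univ_two] <;> ring
  · intro i j
    rw [pow_one]
    fin_cases i <;> fin_cases j <;> simp <;> linarith
  intro Pstar hPstar
  have tendsto_aux : ∀ u w : ℝ, Tendsto (fun n : ℕ => (u + w*(1-x-y)^n)/(x+y)) atTop (𝓝 (u/(x+y))) := by
    intro u w
    have h0 := tendsto_pow_atTop_nhds_zero_of_abs_lt_one hlam1
    have h1 : Tendsto (fun n : ℕ => u + w*(1-x-y)^n) atTop (𝓝 (u + w*0)) :=
      ((h0.const_mul w).const_add u)
    have h2 := h1.div_const (x+y)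
    simpa using h2
  have entry : ∀ i j : Fin 2, ∃ u w : ℝ, w ≠ 0 ∧
      (∀ n : ℕ, ((!![1 - x, x; y, 1 - y] : Matrix (Fin 2) (Fin 2) ℝ) ^ n) i j
        = (u + w*(1-x-y)^n)/(x+y)) := by
    intro i j
    fin_cases i <;> fin_cases j
    · exact ⟨y, x, ne_of_gt hx0, fun n => by rw [pow_formula x y hs n]; simp⟩
    · exact ⟨x, -x, neg_ne_zero.2 (ne_of_gt hx0), fun n => by rw [pow_formula x y hs n]; simp⟩
    · exact ⟨y, -y, neg_ne_zero.2 (ne_of_gt hy0), fun n => by rw [pow_formula x y hs n]; simp⟩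
    · exact ⟨x, y, ne_of_gt hy0, fun n => by rw [pow_formula x y hs n]; simp⟩
  have hPs : ∀ (i j : Fin 2) (u w : ℝ),
      (∀ n : ℕ, ((!![1 - x, x; y, 1 - y] : Matrix (Fin 2) (Fin 2) ℝ) ^ n) i j
        = (u + w*(1-x-y)^n)/(x+y)) → Pstar i j = u/(x+y) := by
    intro i j u w hf
    refine tendsto_nhds_unique ?_ (tendsto_aux u w)
    have : (fun n : ℕ => ((!![1 - x, x; y, 1 - y] : Matrix (Fin 2) (Fin 2) ℝ) ^ n) i j)
        = fun n : ℕ => (u + w*(1-x-y)^n)/(x+y) := funext hf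
    rw [← this]
    exact hPstar i j
  have hdiff1 : ∀ i j : Fin 2, ∃ C : ℝ, C ≠ 0 ∧
      (∀ n : ℕ, ((!![1 - x, x; y, 1 - y] : Matrix (Fin 2) (Fin 2) ℝ) ^ n) i j - Pstar i j
        = C * (1-x-y)^n) := by
    intro i j
    obtain ⟨u, w, hw, hf⟩ := entry i j
    refine ⟨w/(x+y), div_ne_zero hw hs, fun n => ?_⟩
    rw [hf n, hPs i j u w hf]
    field_simp
    ring
  have hdiff2 : ∀ i j : Fin 2, ∃ C : ℝ, C ≠ 0 ∧
      (∀ n : ℕ, ((!![1 - x, x; y, 1 - y] : Matrix (Fin 2) (Fin 2) ℝ) ^ (n+1)) i j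
        - ((!![1 - x, x; y, 1 - y] : Matrix (Fin 2) (Fin 2) ℝ) ^ n) i j = C * (1-x-y)^n) := by
    intro i j
    obtain ⟨C, hC, hCeq⟩ := hdiff1 i j
    have hlm1 : (1 - x - y) - 1 ≠ 0 := by intro h; nlinarith
    refine ⟨C * ((1-x-y) - 1), mul_ne_zero hC hlm1, fun n => ?_⟩
    have e1 := hCeq (n+1)
    have e2 := hCeq n
    have : ((!![1 - x, x; y, 1 - y] : Matrix (Fin 2) (Fin 2) ℝ) ^ (n+1)) i j
        - ((!![1 - x, x; y, 1 - y] : Matrix (Fin 2) (Fin 2) ℝ) ^ n) i j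
        = C * (1-x-y)^(n+1) - C * (1-x-y)^n := by linarith
    rw [this, pow_succ]
    ring
  constructor
  · intro hMB
    obtain ⟨C, hC, hCeq⟩ := hdiff1 0 0
    rcases (hMB 0 0).1 with hBen | hEZ
    · have : (fun n : ℕ => ((!![1 - x, x; y, 1 - y] : Matrix (Fin 2) (Fin 2) ℝ) ^ n) 0 0 - Pstar 0 0)
          = fun n : ℕ => C * (1-x-y)^n := funext hCeq
      rw [this] at hBen
      exact irrational_of_benford_geom hC hlamne hBen
    · obtain ⟨N, hN⟩ := hEZ
      have h0 := hN N le_rfl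
      simp only at h0
      rw [hCeq N] at h0
      exact absurd h0 (mul_ne_zero hC (pow_ne_zero _ hlamne))
  · intro hirr i j
    constructor
    · obtain ⟨C, hC, hCeq⟩ := hdiff1 i j
      left
      have : (fun n : ℕ => ((!![1 - x, x; y, 1 - y] : Matrix (Fin 2) (Fin 2) ℝ) ^ n) i j - Pstar i j)
          = fun n : ℕ => C * (1-x-y)^n := funext hCeq
      rw [this]
      exact benfordSeq_geom hC hlamne hirr
    · obtain ⟨C, hC, hCeq⟩ := hdiff2 i j
      left
      have : (fun n : ℕ => ((!![1 - x, x; y, 1 - y] : Matrix (Fin 2) (Fin 2) ℝ) ^ (n+1)) i j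
          - ((!![1 - x, x; y, 1 - y] : Matrix (Fin 2) (Fin 2) ℝ) ^ n) i j)
          = fun n : ℕ => C * (1-x-y)^n := funext hCeq
      rw [this]
      exact benfordSeq_geom hC hlamne hirr
end

section
/- Let P be a d×d row-stochastic irreducible matrix with period p > 1, and let P* be the unique row-stochastic matrix satisfying P*·P = P*. Then for every index pair (i,j) there exists k ∈ {0,1,…,p−1} such that |(P^n − P*)^{(i,j)}| = (P*)^{(i,j)} > 0 for every n ∈ ℕ with n ≢ k (mod p); in particular, no component of the sequence (P^n − P*) is Benford or eventually zero, so P is not Benford. -/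
open Filter Topology MeasureTheory
open scoped Classical

lemma signif_mem {c : ℝ} (hc : 0 < c) : 1 ≤ signif c ∧ signif c < 10 := by
  have h10 : (1:ℝ) < 10 := by norm_num
  set e : ℤ := ⌊Real.logb 10 c⌋ with he
  have hlow : (10:ℝ) ^ e ≤ c := by
    have := Int.floor_le (Real.logb 10 c)
    calc (10:ℝ) ^ e = (10:ℝ) ^ ((e:ℝ)) := by rw [← Real.rpow_intCast]
    _ ≤ (10:ℝ) ^ (Real.logb 10 c) := Real.rpow_le_rpow_of_exponent_le (le_of_lt h10) this
    _ = c := Real.rpow_logb (by norm_num) (by norm_num) hc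
  have hhigh : c < (10:ℝ) ^ (e + 1) := by
    have := Int.lt_floor_add_one (Real.logb 10 c)
    calc c = (10:ℝ) ^ (Real.logb 10 c) := (Real.rpow_logb (by norm_num) (by norm_num) hc).symm
    _ < (10:ℝ) ^ (((e:ℝ) + 1)) := Real.rpow_lt_rpow_of_exponent_lt h10 (by exact_mod_cast this)
    _ = (10:ℝ) ^ (e + 1) := by rw [← Real.rpow_intCast]; push_cast; ring_nf
  have hpow : (0:ℝ) < (10:ℝ) ^ e := zpow_pos (by norm_num) e
  have hs : signif c = c / (10:ℝ) ^ e := by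
    rw [signif, if_neg (ne_of_gt hc)]
  constructor
  · rw [hs, le_div_iff₀ hpow]; linarith
  · rw [hs, div_lt_iff₀ hpow]
    have : (10:ℝ) ^ (e+1) = 10 * (10:ℝ)^e := by
      rw [zpow_add_one₀ (by norm_num : (10:ℝ) ≠ 0)]; ring
    linarith [hhigh.trans_eq this]

lemma count_lb (p k N : ℕ) (hp : 0 < p) (hk : k < p) :
    N / p ≤ ((Finset.Icc 1 N).filter (fun n => n % p = k)).card := by
  classical
  set k' : ℕ := if k = 0 then p else k with hk'
  have hk'pos : 0 < k' := by by_cases h : k = 0 <;> simp [hk', h] <;> omega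
  have hk'le : k' ≤ p := by by_cases h : k = 0 <;> simp [hk', h] <;> omega
  have hk'mod : k' % p = k := by
    by_cases h : k = 0 <;> simp [hk', h, Nat.mod_self] <;> exact Nat.mod_eq_of_lt hk
  have : (Finset.range (N / p)).card ≤ ((Finset.Icc 1 N).filter (fun n => n % p = k)).card := by
    apply Finset.card_le_card_of_injOn (fun j => j * p + k')
    · intro j hj
      simp only [Finset.mem_coe, Finset.mem_range] at hj
      simp only [Finset.mem_coe, Finset.mem_filter, Finset.mem_Icc]
      refine ⟨⟨by omega, ?_⟩, ?_⟩
      · have h1 : j + 1 ≤ N / p := hj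
        have : (j + 1) * p ≤ (N / p) * p := Nat.mul_le_mul_right _ h1
        have h2 : (N / p) * p ≤ N := Nat.div_mul_le_self N p
        nlinarith
      · rw [Nat.add_comm, Nat.add_mul_mod_self_right, hk'mod]
    · intro a _ b _ hab
      simp only at hab
      have := Nat.eq_of_mul_eq_mul_right hp (by omega : a * p = b * p)
      omega
  simpa using this

lemma count_ub (p k N : ℕ) (hp : 0 < p) (hk : k < p) :
    ((Finset.Icc 1 N).filter (fun n => n % p = k)).card ≤ N / p + 1 := by
  classical
  have : ((Finset.Icc 1 N).filter (fun n => n % p = k)).card ≤ (Finset.range (N / p + 1)).card := by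
    apply Finset.card_le_card_of_injOn (fun n => n / p)
    · intro n hn
      simp only [Finset.mem_coe, Finset.mem_filter, Finset.mem_Icc] at hn
      simp only [Finset.mem_coe, Finset.mem_range]
      have := Nat.div_le_div_right (c := p) hn.1.2
      omega
    · intro a ha b hb hab
      simp only [Finset.mem_coe, Finset.mem_filter, Finset.mem_Icc] at ha hb
      simp only at hab
      have h1 := Nat.div_add_mod a p
      have h2 := Nat.div_add_mod b p
      rw [ha.2] at h1; rw [hb.2] at h2
      rw [hab] at h1
      omega
  simpa using this

lemma count_tendsto (p k : ℕ) (hp : 0 < p) (hk : k < p) :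
    Tendsto (fun N : ℕ => (((Finset.Icc 1 N).filter (fun n => n % p = k)).card : ℝ) / N)
      atTop (𝓝 (1 / p)) := by
  have hlim : Tendsto (fun N : ℕ => (1:ℝ)/N) atTop (𝓝 0) := tendsto_one_div_atTop_nhds_zero_nat
  have h2lim : Tendsto (fun N : ℕ => (2:ℝ)/N) atTop (𝓝 0) := by
    simpa [div_eq_mul_inv] using hlim.const_mul (2:ℝ)
  have hl : Tendsto (fun N : ℕ => 1/(p:ℝ) - 2/N) atTop (𝓝 (1/p)) := by
    simpa using (tendsto_const_nhds (x := 1/(p:ℝ))).sub h2lim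
  have hu : Tendsto (fun N : ℕ => 1/(p:ℝ) + 2/N) atTop (𝓝 (1/p)) := by
    simpa using (tendsto_const_nhds (x := 1/(p:ℝ))).add h2lim
  have hpp : (0:ℝ) < p := by exact_mod_cast hp
  apply tendsto_of_tendsto_of_tendsto_of_le_of_le' hl hu
  · filter_upwards [eventually_ge_atTop 1] with N hN
    have hcard : ((N/p : ℕ) : ℝ) ≤ (((Finset.Icc 1 N).filter (fun n => n % p = k)).card : ℝ) := by
      exact_mod_cast count_lb p k N hp hk
    have hNpos : (0:ℝ) < N := by exact_mod_cast hN
    have hNp : (N:ℝ)/p ≤ ((N/p : ℕ) : ℝ) + 1 := by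
      have h1 := Nat.div_add_mod N p
      have h2 := Nat.mod_lt N hp
      have h3 : (N:ℝ) < p * ((N/p:ℕ):ℝ) + p := by exact_mod_cast by omega
      rw [div_le_iff₀ hpp]
      nlinarith
    have hN0 : (N:ℝ) ≠ 0 := hNpos.ne'
    have hp0 : (p:ℝ) ≠ 0 := hpp.ne'
    rw [sub_le_iff_le_add]
    calc (1:ℝ)/p = ((N:ℝ)/p)/N := by field_simp
      _ ≤ (((N/p:ℕ):ℝ)+1)/N := by gcongr
      _ = ((N/p:ℕ):ℝ)/N + 1/N := by ring
      _ ≤ (((Finset.Icc 1 N).filter (fun n => n % p = k)).card : ℝ)/N + 2/N := by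
          gcongr
          norm_num
  · filter_upwards [eventually_ge_atTop 1] with N hN
    have hcard : (((Finset.Icc 1 N).filter (fun n => n % p = k)).card : ℝ) ≤ ((N/p:ℕ):ℝ) + 1 := by
      exact_mod_cast count_ub p k N hp hk
    have hNpos : (0:ℝ) < N := by exact_mod_cast hN
    have hNp : ((N/p : ℕ) : ℝ) ≤ (N:ℝ)/p := by
      have := Nat.cast_div_le (α := ℝ) (m := N) (n := p)
      simpa using this
    have hN0 : (N:ℝ) ≠ 0 := hNpos.ne'
    have hp0 : (p:ℝ) ≠ 0 := hpp.ne'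
    calc (((Finset.Icc 1 N).filter (fun n => n % p = k)).card : ℝ)/N
        ≤ (((N/p:ℕ):ℝ)+1)/N := by gcongr
      _ = ((N/p:ℕ):ℝ)/N + 1/N := by ring
      _ ≤ ((N:ℝ)/p)/N + 2/N := by gcongr; norm_num
      _ = 1/(p:ℝ) + 2/N := by field_simp

lemma countA_tendsto (p k : ℕ) (hp : 0 < p) (hk : k < p) :
    Tendsto (fun N : ℕ => (((Finset.Icc 1 N).filter (fun n => n % p ≠ k)).card : ℝ) / N)
      atTop (𝓝 (1 - 1 / p)) := by
  classical
  have hcT := count_tendsto p k hp hk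
  have hone : Tendsto (fun N : ℕ => (N:ℝ)/N) atTop (𝓝 1) := by
    have : (fun N : ℕ => (N:ℝ)/N) =ᶠ[atTop] fun _ => (1:ℝ) := by
      filter_upwards [eventually_ge_atTop 1] with N hN
      have : (N:ℝ) ≠ 0 := by positivity
      field_simp
    rw [tendsto_congr' this]; exact tendsto_const_nhds
  have h1 : Tendsto (fun N : ℕ => (N:ℝ)/N -
      (((Finset.Icc 1 N).filter (fun n => n % p = k)).card : ℝ)/N) atTop (𝓝 (1 - 1/p)) :=
    hone.sub hcT
  refine Tendsto.congr' ?_ h1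
  filter_upwards [eventually_ge_atTop 1] with N hN
  have hc := Finset.card_filter_add_card_filter_not
    (s := Finset.Icc 1 N) (p := fun n => n % p = k)
  have hIcc : (Finset.Icc 1 N).card = N := by simp
  rw [← sub_div]
  congr 1
  have : (((Finset.Icc 1 N).filter (fun n => n % p = k)).card : ℝ) +
      (((Finset.Icc 1 N).filter (fun n => n % p ≠ k)).card : ℝ) = N := by
    exact_mod_cast hIcc ▸ hc
  linarith


/-- an irreducible stochastic matrix with period `p > 1` is not Benford.
Here irreducibility is `∀ i j, ∃ n ≥ 1, (P^n) i j > 0`, the period `p` is characterized as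
the gcd (in the divisibility order) of the return times of each state, and `Pstar` is the
unique row-stochastic matrix with `Pstar * P = Pstar`. -/
theorem periodic_chain_not_benford (d : ℕ) (hd : 1 < d) (P : Matrix (Fin d) (Fin d) ℝ)
    (hP : RowStochastic P)
    (hirr : ∀ i j, ∃ n : ℕ, 0 < n ∧ 0 < (P ^ n) i j)
    (p : ℕ) (hp : 1 < p)
    (hperiod : ∀ i : Fin d,
      (∀ n : ℕ, 0 < n → 0 < (P ^ n) i i → p ∣ n) ∧
      (∀ q : ℕ, (∀ n : ℕ, 0 < n → 0 < (P ^ n) i i → q ∣ n) → q ∣ p))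
    (Pstar : Matrix (Fin d) (Fin d) ℝ) (hPs : RowStochastic Pstar)
    (hfix : Pstar * P = Pstar)
    (huniq : ∀ Q : Matrix (Fin d) (Fin d) ℝ, RowStochastic Q → Q * P = Q → Q = Pstar) :
    (∀ i j, ∃ k : ℕ, k < p ∧ 0 < Pstar i j ∧
      ∀ n : ℕ, 0 < n → n % p ≠ k → |(P ^ n) i j - Pstar i j| = Pstar i j) ∧
    (∀ i j, ¬ BenfordSeq (fun n => (P ^ n) i j - Pstar i j) ∧
      ¬ EventuallyZero (fun n => (P ^ n) i j - Pstar i j)) ∧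
    ¬ MatrixBenford P Pstar := by
  have hppos : 0 < p := by omega
  -- nonnegativity of entries of powers
  have hnn : ∀ (n : ℕ) (i j : Fin d), 0 ≤ (P ^ n) i j := by
    intro n
    induction n with
    | zero =>
      intro i j
      simp only [pow_zero, Matrix.one_apply]
      split <;> norm_num
    | succ n ih =>
      intro i j
      rw [pow_succ, Matrix.mul_apply]
      exact Finset.sum_nonneg fun l _ => mul_nonneg (ih i l) (hP.1 l j)
  -- Pstar * P^n = Pstar
  have hstar : ∀ n : ℕ, Pstar * P ^ n = Pstar := by
    intro n
    induction n with
    | zero => simp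
    | succ n ih => rw [pow_succ, ← mul_assoc, ih, hfix]
  -- entries of Pstar are positive
  have hPspos : ∀ i j, 0 < Pstar i j := by
    intro i j
    have hsum := hPs.2 i
    have hex : ∃ l, 0 < Pstar i l := by
      by_contra h
      push_neg at h
      have : ∑ l, Pstar i l = 0 :=
        Finset.sum_eq_zero fun l _ => le_antisymm (h l) (hPs.1 i l)
      rw [hsum] at this; norm_num at this
    obtain ⟨l, hl⟩ := hex
    obtain ⟨n, hn, hpos⟩ := hirr l j
    have he : Pstar i j = ∑ m, Pstar i m * (P ^ n) m j := by
      conv_lhs => rw [← hstar n]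
      rw [Matrix.mul_apply]
    rw [he]
    have hle : Pstar i l * (P ^ n) l j ≤ ∑ m, Pstar i m * (P ^ n) m j :=
      Finset.single_le_sum (fun m _ => mul_nonneg (hPs.1 i m) (hnn n m j)) (Finset.mem_univ l)
    nlinarith [mul_pos hl hpos]
  -- cyclic class structure
  have hcyc : ∀ (i j : Fin d) (m n : ℕ), 0 < m → 0 < n →
      0 < (P ^ m) i j → 0 < (P ^ n) i j → m % p = n % p := by
    intro i j m n hm hn h1 h2
    obtain ⟨s, hs, hsp⟩ := hirr j i
    have key : ∀ r : ℕ, 0 < r → 0 < (P ^ r) i j → p ∣ (r + s) := by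
      intro r hr hrp
      apply (hperiod i).1 (r + s) (by omega)
      have heq : (P ^ (r+s)) i i = ∑ l, (P ^ r) i l * (P ^ s) l i := by
        rw [pow_add, Matrix.mul_apply]
      rw [heq]
      have hle : (P ^ r) i j * (P ^ s) j i ≤ ∑ l, (P ^ r) i l * (P ^ s) l i :=
        Finset.single_le_sum (fun l _ => mul_nonneg (hnn r i l) (hnn s l i)) (Finset.mem_univ j)
      nlinarith [mul_pos hrp hsp]
    have e1 : Nat.ModEq p (m + s) 0 := (Nat.modEq_zero_iff_dvd).mpr (key m hm h1)
    have e2 : Nat.ModEq p (n + s) 0 := (Nat.modEq_zero_iff_dvd).mpr (key n hn h2)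
    exact Nat.ModEq.add_right_cancel' s (e1.trans e2.symm)
  -- PART 1
  have key : ∀ i j, ∃ k : ℕ, k < p ∧ 0 < Pstar i j ∧
      ∀ n : ℕ, 0 < n → n % p ≠ k → |(P ^ n) i j - Pstar i j| = Pstar i j := by
    intro i j
    obtain ⟨n0, hn0, hpos0⟩ := hirr i j
    refine ⟨n0 % p, Nat.mod_lt _ hppos, hPspos i j, ?_⟩
    intro n hn hne
    have hzero : (P ^ n) i j = 0 := by
      rcases (hnn n i j).lt_or_eq with h | h
      · exact absurd (hcyc i j n n0 hn hn0 h hpos0) hne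
      · exact h.symm
    rw [hzero, zero_sub, abs_neg, abs_of_pos (hPspos i j)]
  -- PART 2
  have noB : ∀ i j, ¬ BenfordSeq (fun n => (P ^ n) i j - Pstar i j) ∧
      ¬ EventuallyZero (fun n => (P ^ n) i j - Pstar i j) := by
    intro i j
    obtain ⟨k, hk, hSpos, habs⟩ := key i j
    have hbig : ∀ N : ℕ, ∃ n, N ≤ n ∧ 0 < n ∧ n % p ≠ k := by
      intro N
      refine ⟨(max N 1) * p + (k+1) % p, ?_, ?_, ?_⟩
      · calc N ≤ max N 1 := le_max_left N 1
          _ ≤ max N 1 * p := Nat.le_mul_of_pos_right _ hppos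
          _ ≤ _ := Nat.le_add_right _ _
      · have : 1 * 1 ≤ max N 1 * p := Nat.mul_le_mul (le_max_right N 1) hppos
        omega
      · have hr : (k+1) % p < p := Nat.mod_lt _ hppos
        rw [Nat.add_comm, Nat.add_mul_mod_self_right, Nat.mod_eq_of_lt hr]
        by_cases hkp : k + 1 = p
        · rw [hkp, Nat.mod_self]; omega
        · rw [Nat.mod_eq_of_lt (by omega)]; omega
    constructor
    · -- not Benford
      intro hB
      obtain ⟨hs1, hs2⟩ := signif_mem hSpos
      set s := signif (Pstar i j) with hsdef
      have hsig : ∀ n, 0 < n → n % p ≠ k →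
          signif |(P ^ n) i j - Pstar i j| = s := by
        intro n h1 h2; rw [habs n h1 h2]
      have hAT := countA_tendsto p k hppos hk
      have hBs := hB s hs1 hs2
      beta_reduce at hBs
      -- step 1 : 1 - 1/p ≤ logb 10 s
      have hsub1 : ∀ N : ℕ, ((Finset.Icc 1 N).filter fun n => n % p ≠ k) ⊆
          ((Finset.Icc 1 N).filter fun n =>
            signif |(P ^ n) i j - Pstar i j| ≤ s) := by
        intro N n hn
        simp only [Finset.mem_filter, Finset.mem_Icc] at *
        exact ⟨hn.1, le_of_eq (hsig n (by omega) hn.2)⟩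
      have h1 : 1 - 1/(p:ℝ) ≤ Real.logb 10 s := by
        refine le_of_tendsto_of_tendsto' hAT hBs fun N => ?_
        exact div_le_div_of_nonneg_right (hc := Nat.cast_nonneg N)
          (by exact_mod_cast Finset.card_le_card (hsub1 N))
      -- step 2 : choose t
      have hp2 : (2:ℝ) ≤ p := by exact_mod_cast hp
      have hppR : (0:ℝ) < p := by positivity
      set ε : ℝ := ((p:ℝ) - 1)/(2*p) with hεdef
      have hεpos : 0 < ε := by
        apply div_pos <;> linarith
      have hεeq : 2*ε = 1 - 1/(p:ℝ) := by
        rw [hεdef]; field_simp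
      have hhalf : (1:ℝ)/2 ≤ 1 - 1/(p:ℝ) := by
        have : 1/(p:ℝ) ≤ 1/2 := by
          apply one_div_le_one_div_of_le <;> linarith
        linarith
      have hspos : (0:ℝ) < s := by linarith
      set t : ℝ := s * (10:ℝ) ^ (-ε) with htdef
      have hlogt : Real.logb 10 t = Real.logb 10 s - ε := by
        rw [htdef, Real.logb_mul (ne_of_gt hspos)
          (ne_of_gt (Real.rpow_pos_of_pos (by norm_num) _)),
          Real.logb_rpow (by norm_num) (by norm_num)]
        ring
      have ht0 : 0 < t := by
        rw [htdef]; positivity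
      have hlogt0 : 0 ≤ Real.logb 10 t := by
        rw [hlogt]; linarith
      have ht1 : 1 ≤ t := by
        have h := Real.rpow_logb (by norm_num : (0:ℝ) < 10) (by norm_num) ht0
        calc (1:ℝ) = (10:ℝ) ^ (0:ℝ) := by rw [Real.rpow_zero]
          _ ≤ (10:ℝ) ^ (Real.logb 10 t) :=
            Real.rpow_le_rpow_of_exponent_le (by norm_num) hlogt0
          _ = t := h
      have htlts : t < s := by
        have : (10:ℝ) ^ (-ε) < 1 :=
          Real.rpow_lt_one_of_one_lt_of_neg (by norm_num) (by linarith)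
        calc t = s * (10:ℝ) ^ (-ε) := htdef
          _ < s * 1 := by exact mul_lt_mul_of_pos_left this hspos
          _ = s := mul_one s
      have ht2 : t < 10 := lt_trans htlts hs2
      have hBt := hB t ht1 ht2
      beta_reduce at hBt
      -- cards inequality
      have hcards : ∀ N : ℕ,
          (((Finset.Icc 1 N).filter fun n =>
              signif |(P ^ n) i j - Pstar i j| ≤ t).card : ℝ) +
          (((Finset.Icc 1 N).filter fun n => n % p ≠ k).card : ℝ) ≤
          (((Finset.Icc 1 N).filter fun n =>
              signif |(P ^ n) i j - Pstar i j| ≤ s).card : ℝ) := by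
        intro N
        have hdisj : Disjoint ((Finset.Icc 1 N).filter fun n =>
              signif |(P ^ n) i j - Pstar i j| ≤ t)
            ((Finset.Icc 1 N).filter fun n => n % p ≠ k) := by
          rw [Finset.disjoint_left]
          intro n hn1 hn2
          simp only [Finset.mem_filter, Finset.mem_Icc] at hn1 hn2
          have := hsig n (by omega) hn2.2
          rw [this] at hn1
          linarith [hn1.2]
        have hsubt : ((Finset.Icc 1 N).filter fun n =>
              signif |(P ^ n) i j - Pstar i j| ≤ t) ⊆
            ((Finset.Icc 1 N).filter fun n =>
              signif |(P ^ n) i j - Pstar i j| ≤ s) := by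
          intro n hn
          simp only [Finset.mem_filter, Finset.mem_Icc] at *
          exact ⟨hn.1, le_trans hn.2 (le_of_lt htlts)⟩
        have hcup := Finset.card_union_of_disjoint hdisj
        have hsub := Finset.card_le_card (Finset.union_subset hsubt (hsub1 N))
        rw [hcup] at hsub
        exact_mod_cast hsub
      have hlim2 : Tendsto (fun N : ℕ =>
          (((Finset.Icc 1 N).filter fun n =>
              signif |(P ^ n) i j - Pstar i j| ≤ t).card : ℝ) / N +
          (((Finset.Icc 1 N).filter fun n => n % p ≠ k).card : ℝ) / N)
          atTop (𝓝 (Real.logb 10 t + (1 - 1/p))) := hBt.add hAT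
      have hfinal : Real.logb 10 t + (1 - 1/(p:ℝ)) ≤ Real.logb 10 s := by
        refine le_of_tendsto_of_tendsto' hlim2 hBs fun N => ?_
        rw [← add_div]
        gcongr
        exact hcards N
      rw [hlogt] at hfinal
      linarith
    · -- not eventually zero
      rintro ⟨N, hN⟩
      obtain ⟨n, h1, h2, h3⟩ := hbig N
      have h0 : (P ^ n) i j - Pstar i j = 0 := hN n h1
      have := habs n h2 h3
      rw [h0, abs_zero] at this
      linarith
  refine ⟨key, noB, ?_⟩
  intro hMB
  obtain ⟨h1, _⟩ := hMB ⟨0, by omega⟩ ⟨0, by omega⟩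
  rcases h1 with h | h
  · exact (noB _ _).1 h
  · exact (noB _ _).2 h
end
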